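/- arXiv:1004.0224 — 2 statements merged into one kernel-verified Lean document; each statement's English description precedes it below -/
import Mathlib

section
/- Let M be a G-module on which the complex conjugation ι acts as −1, and let Λ be a system of representatives for the conjugacy classes of the CM-types of K. Then the composition of the map (N_Φ)_{Φ∈Λ} : M^H → ⊕_{Φ∈Λ} M^{H̃(Φ)}, a ↦ (Σ_{φ∈Φ} φ(a))_{Φ∈Λ}, followed by the map Σ_{Φ∈Λ} N_{Φ*} : ⊕_{Φ∈Λ} M^{H̃(Φ)} → M^H, (b_Φ) ↦ Σ_{Φ∈Λ} Σ_{ψ∈Φ*} ψ(b_Φ), equals multiplication by 2^{N−1} on M^H. -/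
/- Common combinatorial skeleton for the Galois-theoretic setting of the paper:
`G = Gal(K^c/ℚ)`, `H = Gal(K^c/K)`, `H₀ = Gal(K^c/K₀)`, `ι` the complex conjugation.
Embeddings `K ↪ ℂ` correspond to left cosets `G ⧸ H`, embeddings `K₀ ↪ ℂ` to `G ⧸ H₀`. -/

open Pointwise
open scoped Classical

variable {G : Type} [Group G]

/-- A CM-type of `K`: a set `Φ` of embeddings `K ↪ ℂ` (i.e. of cosets in `G ⧸ H`) such that
`Φ` and `ιΦ` are disjoint and every embedding lies in `Φ ∪ ιΦ`. -/
def IsCMType (H : Subgroup G) (ι : G) (Φ : Set (G ⧸ H)) : Prop :=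
  (∀ φ ∈ Φ, ι • φ ∉ Φ) ∧ ∀ φ : G ⧸ H, φ ∈ Φ ∨ ι • φ ∈ Φ

/-- `S_Φ = ⋃_{φ ∈ Φ} φH ⊆ G`. -/
def SPhi (H : Subgroup G) (Φ : Set (G ⧸ H)) : Set G := {g : G | (g : G ⧸ H) ∈ Φ}

/-- `H̃(Φ) = {σ ∈ G : σ S_Φ = S_Φ}`. -/
def Htilde (H : Subgroup G) (Φ : Set (G ⧸ H)) : Subgroup G := MulAction.stabilizer G (SPhi H Φ)

/-- The natural projection `G ⧸ H → G ⧸ H₀` (restriction of embeddings of `K` to `K₀`). -/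
def proj (H H₀ : Subgroup G) (h : H ≤ H₀) : G ⧸ H → G ⧸ H₀ :=
  Quotient.map' id fun a b hab => by
    rw [QuotientGroup.leftRel_apply] at *
    exact h hab

open Classical in
/-- The 1-cocycle `r_Φ : G → Ind`, `r_Φ(τ)(φᵢH₀) = 0` iff `τ⁻¹φᵢ ∈ Φ`, where `φᵢ` is the
unique member of `Φ` lying over the coset `φᵢH₀`. -/
noncomputable def rPhi (H H₀ : Subgroup G) (h : H ≤ H₀) (Φ : Set (G ⧸ H)) (τ : G) :
    (G ⧸ H₀) → ZMod 2 :=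
  fun x => if ∃ φ ∈ Φ, proj H H₀ h φ = x ∧ τ⁻¹ • φ ∈ Φ then 0 else 1

/-- The action of `G` on `Ind = Map(G/H₀, ℤ/2ℤ)`, `(σ·f)(τH₀) = f(σ⁻¹τH₀)`. -/
def indAct (H₀ : Subgroup G) (σ : G) (f : (G ⧸ H₀) → ZMod 2) : (G ⧸ H₀) → ZMod 2 :=
  fun x => f (σ⁻¹ • x)

/-- For `f ∈ Ind`, the CM-type `Φ_f = {ι^{f(φ₁H₀)}φ₁, …, ι^{f(φ_NH₀)}φ_N}` attached to a fixed
CM-type `Φ₀`. -/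
noncomputable def PhiF (H H₀ : Subgroup G) (h : H ≤ H₀) (ι : G) (Φ₀ : Set (G ⧸ H))
    (f : (G ⧸ H₀) → ZMod 2) : Set (G ⧸ H) :=
  (fun φ => ι ^ (f (proj H H₀ h φ)).val • φ) '' Φ₀

/-- The `*`-action of `G` on `Ind`: `τ * f := r_{Φ₀}(τ) + τ·f`. -/
noncomputable def starAct (H H₀ : Subgroup G) (h : H ≤ H₀) (Φ₀ : Set (G ⧸ H)) (τ : G)
    (f : (G ⧸ H₀) → ZMod 2) : (G ⧸ H₀) → ZMod 2 :=
  rPhi H H₀ h Φ₀ τ + indAct H₀ τ f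

/-- The half norm map `N_Φ : M^H → M^{H̃(Φ)}`, `a ↦ ∑_{φ ∈ Φ} φ(a)`, where each embedding
`φ ∈ Φ ⊆ G ⧸ H` acts on `M^H` through a coset representative. -/
noncomputable def halfNorm {G : Type} [Group G] (H : Subgroup G) {M : Type} [AddCommMonoid M]
    [DistribMulAction G M] (Φ : Set (G ⧸ H)) (a : M) : M :=
  ∑ᶠ φ ∈ Φ, (Quotient.out φ : G) • a

/-- The dual half norm map `N_{Φ*} : M^{H̃(Φ)} → M^H`, `b ↦ ∑_{ψ ∈ Φ*} ψ(b)`, where the dual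
CM-type `Φ*` consists of the inverses of representatives of the right cosets `H̃(Φ)\S_Φ`. -/
noncomputable def dualHalfNorm {G : Type} [Group G] (H : Subgroup G) {M : Type}
    [AddCommMonoid M] [DistribMulAction G M] (Φ : Set (G ⧸ H)) (b : M) : M :=
  ∑ᶠ c : Quotient (QuotientGroup.rightRel (Htilde H Φ)),
    if Quotient.out c ∈ SPhi H Φ then (Quotient.out c)⁻¹ • b else 0

namespace CMAux

lemma mk_out (H : Subgroup G) (q : G ⧸ H) : ((Quotient.out q : G) : G ⧸ H) = q :=
  Quotient.out_eq q

lemma smul_mk (H : Subgroup G) (g x : G) : (g • (↑x : G ⧸ H)) = ↑(g * x) := by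
  rw [MulAction.Quotient.smul_mk]; rfl

lemma smul_out (H : Subgroup G) (g : G) (x : G ⧸ H) : g • x = ↑(g * x.out) := by
  conv_lhs => rw [← mk_out H x]; rw [smul_mk]

lemma mem_sphi (H : Subgroup G) (Φ : Set (G ⧸ H)) (g : G) :
    g ∈ SPhi H Φ ↔ (g : G ⧸ H) ∈ Φ := Iff.rfl

/-- If `a` is `H`-fixed, `g • a` only depends on the coset `gH`. -/
lemma smul_eq_of_mk_eq (H : Subgroup G) {M : Type} [AddCommGroup M] [DistribMulAction G M]
    {a : M} (ha : ∀ h ∈ H, h • a = a) {g g' : G} (hg : (g : G ⧸ H) = (g' : G ⧸ H)) :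
    g • a = g' • a := by
  rw [QuotientGroup.eq] at hg
  have : g' = g * (g⁻¹ * g') := by group
  rw [this, mul_smul, ha _ hg]

lemma out_smul (H : Subgroup G) {M : Type} [AddCommGroup M] [DistribMulAction G M]
    {a : M} (ha : ∀ h ∈ H, h • a = a) (g : G) :
    (Quotient.out (↑g : G ⧸ H)) • a = g • a :=
  smul_eq_of_mk_eq H ha (by rw [mk_out])

section iota
variable {H : Subgroup G} {ι : G}

lemma iota_iota (hι2 : ι * ι = 1) (x : G ⧸ H) : ι • ι • x = x := by
  rw [smul_smul, hι2, one_smul]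

lemma iota_smul_comm (hcent : ∀ g : G, g * ι = ι * g) (g : G) (x : G ⧸ H) :
    g • ι • x = ι • g • x := by
  rw [smul_smul, smul_smul, hcent]

lemma iota_inv (hι2 : ι * ι = 1) : ι⁻¹ = ι := inv_eq_of_mul_eq_one_right hι2

lemma iota_smul_ne (hι2 : ι * ι = 1) (hcent : ∀ g : G, g * ι = ι * g) (hιH : ι ∉ H)
    (x : G ⧸ H) : ι • x ≠ x := by
  intro h
  have h2 : ((ι * Quotient.out x : G) : G ⧸ H) = ((Quotient.out x : G) : G ⧸ H) := by
    rw [← smul_mk H, mk_out]; exact h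
  rw [QuotientGroup.eq] at h2
  apply hιH
  have h4 : (ι * Quotient.out x)⁻¹ * Quotient.out x = ι := by
    rw [mul_inv_rev, iota_inv hι2, mul_assoc, ← hcent, ← mul_assoc, inv_mul_cancel, one_mul]
  rwa [h4] at h2

/-- CM-types are characterised by: `x ∈ Φ ↔ ι•x ∉ Φ`. -/
lemma isCM_iff (hι2 : ι * ι = 1) (Φ : Set (G ⧸ H)) :
    IsCMType H ι Φ ↔ ∀ x : G ⧸ H, (x ∈ Φ ↔ ι • x ∉ Φ) := by
  constructor
  · rintro ⟨h1, h2⟩ x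
    exact ⟨fun hx => h1 x hx, fun hx => (h2 x).resolve_right hx⟩
  · intro h
    refine ⟨fun x hx => (h x).1 hx, fun x => ?_⟩
    by_cases hx : x ∈ Φ
    · exact Or.inl hx
    · right
      by_contra hix
      have h2 := h (ι • x)
      rw [iota_iota hι2] at h2
      exact hix (h2.mpr hx)

lemma isCM_smul (hcent : ∀ g : G, g * ι = ι * g) {Φ : Set (G ⧸ H)}
    (hΦ : IsCMType H ι Φ) (τ : G) : IsCMType H ι (τ • Φ) := by
  obtain ⟨h1, h2⟩ := hΦ
  constructor
  · rintro φ hφ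
    rw [Set.mem_smul_set_iff_inv_smul_mem] at hφ ⊢
    rw [iota_smul_comm hcent]
    exact h1 _ hφ
  · intro φ
    rcases h2 (τ⁻¹ • φ) with h | h
    · exact Or.inl (Set.mem_smul_set_iff_inv_smul_mem.mpr h)
    · refine Or.inr (Set.mem_smul_set_iff_inv_smul_mem.mpr ?_)
      rw [iota_smul_comm hcent]
      exact h
end iota

end CMAux

namespace CMAux
section swap
variable {H : Subgroup G} {ι : G}

/-- Swap the choice of a CM-type at the pair `{v, ι•v}`. -/
def swapAt (ι : G) (v : G ⧸ H) (Ψ : Set (G ⧸ H)) : Set (G ⧸ H) :=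
  symmDiff Ψ {v, ι • v}

lemma mem_pair_iota (hι2 : ι * ι = 1) {v x : G ⧸ H} :
    x ∈ ({v, ι • v} : Set (G ⧸ H)) ↔ ι • x ∈ ({v, ι • v} : Set (G ⧸ H)) := by
  simp only [Set.mem_insert_iff, Set.mem_singleton_iff]
  constructor
  · rintro (rfl | rfl)
    · exact Or.inr rfl
    · exact Or.inl (iota_iota hι2 v)
  · rintro (h | h)
    · right; rw [← h, iota_iota hι2]
    · left; have := congrArg (ι • ·) h; simpa [iota_iota hι2] using this

lemma mem_swapAt_of_not_mem {v x : G ⧸ H} {Ψ : Set (G ⧸ H)}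
    (hx : x ∉ ({v, ι • v} : Set (G ⧸ H))) : x ∈ swapAt ι v Ψ ↔ x ∈ Ψ := by
  simp only [swapAt, Set.mem_symmDiff]; tauto

lemma mem_swapAt_of_mem {v x : G ⧸ H} {Ψ : Set (G ⧸ H)}
    (hx : x ∈ ({v, ι • v} : Set (G ⧸ H))) : x ∈ swapAt ι v Ψ ↔ x ∉ Ψ := by
  simp only [swapAt, Set.mem_symmDiff]; tauto

lemma swapAt_swapAt (v : G ⧸ H) (Ψ : Set (G ⧸ H)) : swapAt ι v (swapAt ι v Ψ) = Ψ :=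
  symmDiff_symmDiff_cancel_right _ Ψ

lemma isCM_swapAt (hι2 : ι * ι = 1) {v : G ⧸ H} {Ψ : Set (G ⧸ H)}
    (hΨ : IsCMType H ι Ψ) : IsCMType H ι (swapAt ι v Ψ) := by
  rw [isCM_iff hι2] at hΨ ⊢
  intro x
  by_cases hx : x ∈ ({v, ι • v} : Set (G ⧸ H))
  · rw [mem_swapAt_of_mem hx, mem_swapAt_of_mem ((mem_pair_iota hι2).mp hx)]
    have h' := hΨ x; tauto
  · rw [mem_swapAt_of_not_mem hx,
      mem_swapAt_of_not_mem (fun c => hx ((mem_pair_iota hι2).mpr c))]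
    exact hΨ x

variable [Fintype G]

/-- The finset of all CM-types. -/
noncomputable def allCM (H : Subgroup G) (ι : G) : Finset (Set (G ⧸ H)) :=
  letI : Fintype (G ⧸ H) := Fintype.ofFinite _
  Finset.univ.filter (fun Ψ : Set (G ⧸ H) => IsCMType H ι Ψ)

lemma mem_allCM {Ψ : Set (G ⧸ H)} : Ψ ∈ allCM H ι ↔ IsCMType H ι Ψ := by
  letI : Fintype (G ⧸ H) := Fintype.ofFinite _
  simp [allCM]

/-- Swapping at the pair of `v` gives a bijection between CM-types (satisfying a
swap-invariant property `p`) containing `v` and those containing `ι•v`. -/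
lemma card_filter_swap (hι2 : ι * ι = 1) (v : G ⧸ H) (p : Set (G ⧸ H) → Prop)
    (hp : ∀ Ψ, IsCMType H ι Ψ → (p (swapAt ι v Ψ) ↔ p Ψ)) :
    ((allCM H ι).filter (fun Ψ => p Ψ ∧ v ∈ Ψ)).card
      = ((allCM H ι).filter (fun Ψ => p Ψ ∧ ι • v ∈ Ψ)).card := by
  apply Finset.card_nbij' (i := swapAt ι v) (j := swapAt ι v)
  · intro Ψ hΨ
    simp only [Finset.mem_coe, Finset.mem_filter, mem_allCM] at hΨ ⊢
    obtain ⟨hcm, hpΨ, hv⟩ := hΨ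
    refine ⟨isCM_swapAt hι2 hcm, (hp Ψ hcm).mpr hpΨ, ?_⟩
    rw [mem_swapAt_of_mem (by simp)]
    rw [isCM_iff hι2] at hcm
    exact fun c => ((hcm v).mp hv) c
  · intro Ψ hΨ
    simp only [Finset.mem_coe, Finset.mem_filter, mem_allCM] at hΨ ⊢
    obtain ⟨hcm, hpΨ, hv⟩ := hΨ
    refine ⟨isCM_swapAt hι2 hcm, (hp Ψ hcm).mpr hpΨ, ?_⟩
    rw [mem_swapAt_of_mem (by simp)]
    rw [isCM_iff hι2] at hcm
    intro hvΨ
    exact (hcm v).mp hvΨ hv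
  · intro Ψ _; exact swapAt_swapAt v Ψ
  · intro Ψ _; exact swapAt_swapAt v Ψ

/-- Exactly half of all CM-types contain a given embedding. -/
lemma two_mul_card_filter_mem (hι2 : ι * ι = 1) (u : G ⧸ H) :
    2 * ((allCM H ι).filter (fun Ψ => u ∈ Ψ)).card = (allCM H ι).card := by
  have h1 := card_filter_swap (H := H) hι2 u (fun _ => True) (fun _ _ => Iff.rfl)
  simp only [true_and] at h1
  have h2 : ((allCM H ι).filter (fun Ψ => ι • u ∈ Ψ)).card
      = ((allCM H ι).filter (fun Ψ => ¬ (u ∈ Ψ))).card := by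
    congr 1
    apply Finset.filter_congr
    intro Ψ hΨ
    rw [mem_allCM] at hΨ
    have h' := (isCM_iff hι2 _).mp hΨ u
    constructor
    · intro hiu hu; exact h'.mp hu hiu
    · intro hu; by_contra hiu; exact hu (h'.mpr hiu)
  rw [two_mul, ← Finset.card_filter_add_card_filter_not
    (s := allCM H ι) (fun Ψ => u ∈ Ψ), h1, h2]

end swap
end CMAux

namespace CMAux
section proj
variable {H H₀ : Subgroup G} {ι : G} (hle : H ≤ H₀)

lemma proj_mk (g : G) : proj H H₀ hle (↑g : G ⧸ H) = (↑g : G ⧸ H₀) := rfl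

lemma proj_eq_iff (hι2 : ι * ι = 1) (hcent : ∀ g : G, g * ι = ι * g)
    (hcosets : ∀ g : G, g ∈ H₀ ↔ g ∈ H ∨ ι * g ∈ H) (x y : G ⧸ H) :
    proj H H₀ hle x = proj H H₀ hle y ↔ (x = y ∨ x = ι • y) := by
  induction x using QuotientGroup.induction_on with
  | H g =>
  induction y using QuotientGroup.induction_on with
  | H g' =>
  rw [proj_mk, proj_mk, QuotientGroup.eq, hcosets, smul_mk, QuotientGroup.eq,
    QuotientGroup.eq]
  constructor
  · rintro (h | h)
    · exact Or.inl h
    · right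
      have : g⁻¹ * (ι * g') = ι * (g⁻¹ * g') := by
        rw [← mul_assoc, ← mul_assoc, hcent]
      rwa [this]
  · rintro (h | h)
    · exact Or.inl h
    · right
      have : g⁻¹ * (ι * g') = ι * (g⁻¹ * g') := by
        rw [← mul_assoc, ← mul_assoc, hcent]
      rwa [← this]

lemma proj_out (b : G ⧸ H₀) : proj H H₀ hle (↑(Quotient.out b) : G ⧸ H) = b := by
  rw [proj_mk, mk_out]

lemma proj_iota_smul (hι2 : ι * ι = 1) (hcent : ∀ g : G, g * ι = ι * g)
    (hcosets : ∀ g : G, g ∈ H₀ ↔ g ∈ H ∨ ι * g ∈ H) (x : G ⧸ H) :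
    proj H H₀ hle (ι • x) = proj H H₀ hle x :=
  (proj_eq_iff hle hι2 hcent hcosets _ _).mpr (Or.inr rfl)

variable (ι) in
/-- CM-types are in bijection with sections of `G⧸H → G⧸H₀`. -/
noncomputable def cmEquiv (hι2 : ι * ι = 1) (hcent : ∀ g : G, g * ι = ι * g) (hιH : ι ∉ H)
    (hcosets : ∀ g : G, g ∈ H₀ ↔ g ∈ H ∨ ι * g ∈ H) :
    {Ψ : Set (G ⧸ H) // IsCMType H ι Ψ} ≃
      ∀ b : G ⧸ H₀, {x : G ⧸ H // proj H H₀ hle x = b} where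
  toFun Ψ b :=
    if h : (↑(Quotient.out b) : G ⧸ H) ∈ Ψ.1 then ⟨↑(Quotient.out b), proj_out hle b⟩
    else ⟨ι • ↑(Quotient.out b), by rw [proj_iota_smul hle hι2 hcent hcosets, proj_out]⟩
  invFun s := ⟨{x : G ⧸ H | (s (proj H H₀ hle x) : G ⧸ H) = x}, by
    rw [isCM_iff hι2]
    intro x
    have hne : ∀ y : G ⧸ H, ι • y ≠ y := iota_smul_ne hι2 hcent hιH
    have hsx : (s (proj H H₀ hle x) : G ⧸ H) = x ∨ (s (proj H H₀ hle x) : G ⧸ H) = ι • x := by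
      rw [← proj_eq_iff hle hι2 hcent hcosets]
      exact (s (proj H H₀ hle x)).2
    constructor
    · intro hx hx'
      rw [Set.mem_setOf_eq] at hx
      rw [Set.mem_setOf_eq, proj_iota_smul hle hι2 hcent hcosets] at hx'
      exact hne x (hx.symm.trans hx').symm
    · intro h
      rcases hsx with h' | h'
      · exact h'
      · exfalso
        apply h
        rw [Set.mem_setOf_eq, proj_iota_smul hle hι2 hcent hcosets]
        exact h'⟩
  left_inv := by
    rintro ⟨Ψ, hΨ⟩
    have hcm := (isCM_iff hι2 Ψ).mp hΨ
    have hne : ∀ y : G ⧸ H, ι • y ≠ y := iota_smul_ne hι2 hcent hιH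
    apply Subtype.ext
    ext x
    simp only [Set.mem_setOf_eq]
    have hx : x = (↑(Quotient.out (proj H H₀ hle x)) : G ⧸ H)
        ∨ x = ι • (↑(Quotient.out (proj H H₀ hle x)) : G ⧸ H) := by
      rw [← proj_eq_iff hle hι2 hcent hcosets, proj_out]
    by_cases hmem : (↑(Quotient.out (proj H H₀ hle x)) : G ⧸ H) ∈ Ψ
    · rw [dif_pos hmem]
      show (↑(Quotient.out (proj H H₀ hle x)) : G ⧸ H) = x ↔ x ∈ Ψ
      rcases hx with h | h
      · exact ⟨fun _ => h ▸ hmem, fun _ => h.symm⟩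
      · constructor
        · intro h'
          exact absurd (h'.trans h).symm (hne _)
        · intro h'
          exact absurd (h ▸ h' : ι • (↑(Quotient.out (proj H H₀ hle x)) : G ⧸ H) ∈ Ψ)
            ((hcm _).mp hmem)
    · rw [dif_neg hmem]
      show ι • (↑(Quotient.out (proj H H₀ hle x)) : G ⧸ H) = x ↔ x ∈ Ψ
      rcases hx with h | h
      · constructor
        · intro h'
          exact absurd (h'.trans h) (hne _)
        · intro h'
          exact absurd (h ▸ h') hmem
      · constructor
        · intro _
          by_contra hc
          exact hmem ((hcm _).mpr (h ▸ hc))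
        · intro _
          exact h.symm
  right_inv := by
    intro s
    funext b
    apply Subtype.ext
    beta_reduce
    have hne : ∀ y : G ⧸ H, ι • y ≠ y := iota_smul_ne hι2 hcent hιH
    have hsb : (s b : G ⧸ H) = (↑(Quotient.out b) : G ⧸ H)
        ∨ (s b : G ⧸ H) = ι • (↑(Quotient.out b) : G ⧸ H) := by
      rw [← proj_eq_iff hle hι2 hcent hcosets, (s b).2, proj_out]
    have hmem_iff : ((↑(Quotient.out b) : G ⧸ H)
          ∈ {x : G ⧸ H | (s (proj H H₀ hle x) : G ⧸ H) = x})
        ↔ (s b : G ⧸ H) = (↑(Quotient.out b) : G ⧸ H) := by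
      rw [Set.mem_setOf_eq, proj_out hle]
    rcases hsb with h | h
    · rw [dif_pos (hmem_iff.mpr h)]
      exact h.symm
    · rw [dif_neg (fun c => hne _ ((hmem_iff.mp c ▸ h : (s b : G ⧸ H) = ι • (s b : G ⧸ H))).symm)]
      show ι • (↑(Quotient.out b) : G ⧸ H) = (s b : G ⧸ H)
      exact h.symm

end proj
end CMAux

namespace CMAux
section counting
variable {H H₀ : Subgroup G} {ι : G}

lemma card_allCM [Fintype G] (hle : H ≤ H₀) (hι2 : ι * ι = 1)
    (hcent : ∀ g : G, g * ι = ι * g) (hιH : ι ∉ H)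
    (hcosets : ∀ g : G, g ∈ H₀ ↔ g ∈ H ∨ ι * g ∈ H) (N : ℕ)
    (hN : Nat.card (G ⧸ H₀) = N) : (allCM H ι).card = 2 ^ N := by
  letI : Fintype (G ⧸ H) := Fintype.ofFinite _
  letI : Fintype (G ⧸ H₀) := Fintype.ofFinite _
  have hfib : ∀ b : G ⧸ H₀, Nat.card {x : G ⧸ H // proj H H₀ hle x = b} = 2 := by
    intro b
    rw [Nat.card_eq_two_iff]
    refine ⟨⟨↑(Quotient.out b), proj_out hle b⟩,
      ⟨ι • ↑(Quotient.out b), by rw [proj_iota_smul hle hι2 hcent hcosets, proj_out]⟩, ?_, ?_⟩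
    · intro hc
      have := congrArg (Subtype.val) hc
      exact iota_smul_ne hι2 hcent hιH _ this.symm
    · ext ⟨z, hz⟩
      simp only [Set.mem_insert_iff, Set.mem_singleton_iff, Set.mem_univ, iff_true]
      have : z = (↑(Quotient.out b) : G ⧸ H) ∨ z = ι • (↑(Quotient.out b) : G ⧸ H) := by
        rw [← proj_eq_iff hle hι2 hcent hcosets, hz, proj_out]
      rcases this with h | h
      · exact Or.inl (Subtype.ext h)
      · exact Or.inr (Subtype.ext h)
  calc (allCM H ι).card = Nat.card (allCM H ι) := (Nat.card_eq_finsetCard _).symm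
    _ = Nat.card {Ψ : Set (G ⧸ H) // IsCMType H ι Ψ} :=
        Nat.card_congr (Equiv.subtypeEquivRight (fun Ψ => mem_allCM))
    _ = Nat.card (∀ b : G ⧸ H₀, {x : G ⧸ H // proj H H₀ hle x = b}) :=
        Nat.card_congr (cmEquiv ι hle hι2 hcent hιH hcosets)
    _ = ∏ b : G ⧸ H₀, Nat.card {x : G ⧸ H // proj H H₀ hle x = b} := Nat.card_pi
    _ = 2 ^ N := by
        rw [Finset.prod_congr rfl (fun b _ => hfib b), Finset.prod_const, Finset.card_univ,
          ← Nat.card_eq_fintype_card, hN]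

end counting

section counts
variable (H : Subgroup G)

/-- Number of right `H̃(Φ)`-cosets `c ⊆ S_Φ` with `c • y ⊆ S_Φ` (representative-wise). -/
noncomputable def cCount (Φ : Set (G ⧸ H)) (y : G ⧸ H) : ℕ :=
  Nat.card {c : Quotient (QuotientGroup.rightRel (Htilde H Φ)) //
    Quotient.out c ∈ SPhi H Φ ∧ (Quotient.out c) • y ∈ Φ}

/-- Number of `g ∈ S_Φ` with `g • y ∈ S_Φ`. -/
noncomputable def nCount (Φ : Set (G ⧸ H)) (y : G ⧸ H) : ℕ :=
  Nat.card {g : G // (g : G ⧸ H) ∈ Φ ∧ g • y ∈ Φ}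

variable {H}

lemma htilde_smul_mem {Φ : Set (G ⧸ H)} {σ : G} (hσ : σ ∈ Htilde H Φ) (x : G ⧸ H) :
    σ • x ∈ Φ ↔ x ∈ Φ := by
  have hS : σ • SPhi H Φ = SPhi H Φ := MulAction.mem_stabilizer_iff.mp hσ
  have key : ∀ g : G, σ * g ∈ SPhi H Φ ↔ g ∈ SPhi H Φ := by
    intro g
    conv_lhs => rw [← hS]
    exact Set.smul_mem_smul_set_iff
  rw [smul_out H σ x, ← mem_sphi, key]
  conv_rhs => rw [← mk_out H x]
  exact Iff.rfl

lemma sphi_smul (Φ : Set (G ⧸ H)) (τ : G) : SPhi H (τ • Φ) = τ • SPhi H Φ := by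
  ext g
  rw [mem_sphi, Set.mem_smul_set_iff_inv_smul_mem, Set.mem_smul_set_iff_inv_smul_mem,
    smul_mk H, smul_eq_mul]
  exact Iff.rfl

lemma stab_set_eq (Φ : Set (G ⧸ H)) : MulAction.stabilizer G Φ = Htilde H Φ := by
  ext σ
  rw [MulAction.mem_stabilizer_iff]
  show σ • Φ = Φ ↔ σ ∈ MulAction.stabilizer G (SPhi H Φ)
  rw [MulAction.mem_stabilizer_iff]
  constructor
  · intro h
    rw [← sphi_smul, h]
  · intro h
    have hσ : σ ∈ Htilde H Φ := MulAction.mem_stabilizer_iff.mpr h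
    ext x
    rw [Set.mem_smul_set_iff_inv_smul_mem]
    exact htilde_smul_mem (inv_mem hσ) x
end counts
end CMAux

namespace CMAux
section counts2
variable {H : Subgroup G}

lemma cond_mul_htilde {Φ : Set (G ⧸ H)} {σ : G} (hσ : σ ∈ Htilde H Φ) (g : G) (y : G ⧸ H) :
    ((↑(σ * g) : G ⧸ H) ∈ Φ ∧ (σ * g) • y ∈ Φ) ↔ ((↑g : G ⧸ H) ∈ Φ ∧ g • y ∈ Φ) := by
  rw [← smul_mk H, mul_smul, htilde_smul_mem hσ, htilde_smul_mem hσ]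

lemma nCount_smul (Φ : Set (G ⧸ H)) (τ : G) (y : G ⧸ H) :
    nCount H (τ • Φ) y = nCount H Φ y := by
  apply Nat.card_congr
  refine Equiv.subtypeEquiv (Equiv.mulLeft τ⁻¹) ?_
  intro g
  simp only [Equiv.coe_mulLeft]
  rw [Set.mem_smul_set_iff_inv_smul_mem, Set.mem_smul_set_iff_inv_smul_mem,
    smul_mk H, smul_smul]

lemma card_fiber [Fintype G] (K : Subgroup G) (c : Quotient (QuotientGroup.rightRel K)) :
    (Finset.univ.filter (fun g : G => (Quotient.mk'' g : Quotient (QuotientGroup.rightRel K)) = c)).card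
      = Nat.card K := by
  classical
  have himg : (Finset.univ.filter
        (fun g : G => (Quotient.mk'' g : Quotient (QuotientGroup.rightRel K)) = c))
      = Finset.univ.image (fun k : K => (k : G) * Quotient.out c) := by
    ext g
    simp only [Finset.mem_filter, Finset.mem_univ, true_and, Finset.mem_image]
    constructor
    · intro h
      have h2 : (Quotient.mk'' g : Quotient (QuotientGroup.rightRel K)) = Quotient.mk'' (Quotient.out c) := by
        rw [h]; exact (Quotient.out_eq' c).symm
      rw [Quotient.eq''] at h2
      have h3 : Quotient.out c * g⁻¹ ∈ K := QuotientGroup.rightRel_apply.mp h2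
      refine ⟨⟨g * (Quotient.out c)⁻¹, ?_⟩, ?_⟩
      · rw [← inv_mem_iff]; simpa using h3
      · simp
    · rintro ⟨k, rfl⟩
      rw [← Quotient.out_eq' c, Quotient.eq'']
      apply QuotientGroup.rightRel_apply.mpr
      simpa using k.2
  rw [himg, Finset.card_image_of_injective _ (fun k1 k2 h => Subtype.ext (by
    exact mul_right_cancel h)), Finset.card_univ, Nat.card_eq_fintype_card]

lemma nCount_eq_mul [Fintype G] (Φ : Set (G ⧸ H)) (y : G ⧸ H) :
    nCount H Φ y = cCount H Φ y * Nat.card (Htilde H Φ) := by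
  classical
  letI : Fintype (G ⧸ H) := Fintype.ofFinite _
  letI : Fintype (Quotient (QuotientGroup.rightRel (Htilde H Φ))) := Fintype.ofFinite _
  have h1 : nCount H Φ y
      = (Finset.univ.filter (fun g : G => (↑g : G ⧸ H) ∈ Φ ∧ g • y ∈ Φ)).card := by
    rw [nCount, Nat.card_eq_fintype_card, Fintype.card_subtype]
  have h0 : cCount H Φ y
      = (Finset.univ.filter (fun c : Quotient (QuotientGroup.rightRel (Htilde H Φ)) =>
          (↑(Quotient.out c) : G ⧸ H) ∈ Φ ∧ (Quotient.out c) • y ∈ Φ)).card := by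
    rw [cCount, Nat.card_eq_fintype_card, Fintype.card_subtype]
    rfl
  -- rep independence
  have hrep : ∀ (g : G) (c : Quotient (QuotientGroup.rightRel (Htilde H Φ))),
      (Quotient.mk'' g : Quotient (QuotientGroup.rightRel (Htilde H Φ))) = c →
      (((↑g : G ⧸ H) ∈ Φ ∧ g • y ∈ Φ) ↔
        ((↑(Quotient.out c) : G ⧸ H) ∈ Φ ∧ (Quotient.out c) • y ∈ Φ)) := by
    intro g c hg
    have h2 : (Quotient.mk'' g : Quotient (QuotientGroup.rightRel (Htilde H Φ)))
        = Quotient.mk'' (Quotient.out c) := by rw [hg]; exact (Quotient.out_eq' c).symm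
    rw [Quotient.eq''] at h2
    have h3 : Quotient.out c * g⁻¹ ∈ Htilde H Φ := QuotientGroup.rightRel_apply.mp h2
    have h4 : Quotient.out c = (Quotient.out c * g⁻¹) * g := by group
    rw [h4] at *
    exact (cond_mul_htilde h3 g y).symm
  rw [h1, Finset.card_eq_sum_card_fiberwise
    (f := fun g : G => (Quotient.mk'' g : Quotient (QuotientGroup.rightRel (Htilde H Φ))))
    (t := Finset.univ) (fun _ _ => Finset.mem_univ _)]
  have h5 : ∀ c : Quotient (QuotientGroup.rightRel (Htilde H Φ)),
      ((Finset.univ.filter (fun g : G => (↑g : G ⧸ H) ∈ Φ ∧ g • y ∈ Φ)).filter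
        (fun g => (Quotient.mk'' g : Quotient (QuotientGroup.rightRel (Htilde H Φ))) = c)).card
      = if ((↑(Quotient.out c) : G ⧸ H) ∈ Φ ∧ (Quotient.out c) • y ∈ Φ)
          then Nat.card (Htilde H Φ) else 0 := by
    intro c
    rw [Finset.filter_filter]
    by_cases hc : ((↑(Quotient.out c) : G ⧸ H) ∈ Φ ∧ (Quotient.out c) • y ∈ Φ)
    · rw [if_pos hc, ← card_fiber (Htilde H Φ) c]
      congr 1
      apply Finset.filter_congr
      intro g _
      constructor
      · rintro ⟨_, h⟩; exact h
      · intro h; exact ⟨(hrep g c h).mpr hc, h⟩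
    · rw [if_neg hc, Finset.card_eq_zero, Finset.filter_eq_empty_iff]
      rintro g - ⟨hcond, hgc⟩
      exact hc ((hrep g c hgc).mp hcond)
  rw [Finset.sum_congr rfl (fun c _ => h5 c), Finset.sum_ite, Finset.sum_const,
    Finset.sum_const_zero, add_zero, smul_eq_mul, h0]

lemma card_orbit_mul [Fintype G] (Φ : Set (G ⧸ H)) :
    (Finset.univ.image (fun τ : G => τ • Φ)).card * Nat.card (Htilde H Φ)
      = Fintype.card G := by
  classical
  letI : Fintype (G ⧸ H) := Fintype.ofFinite _
  letI : Fintype (Set (G ⧸ H)) := Fintype.ofFinite _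
  letI : Fintype (MulAction.orbit G Φ) := Fintype.ofFinite _
  letI : Fintype (MulAction.stabilizer G Φ) := Fintype.ofFinite _
  have horb := MulAction.card_orbit_mul_card_stabilizer_eq_card_group G Φ
  have h1 : Fintype.card (MulAction.orbit G Φ)
      = (Finset.univ.image (fun τ : G => τ • Φ)).card := by
    rw [← Set.toFinset_card]
    congr 1
    ext Ψ
    simp [Set.mem_toFinset, MulAction.mem_orbit_iff, Finset.mem_image]
  have h2 : Fintype.card (MulAction.stabilizer G Φ) = Nat.card (Htilde H Φ) := by
    rw [← Nat.card_eq_fintype_card, stab_set_eq]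
  rw [← horb, h1, h2]

end counts2
end CMAux

namespace CMAux
section eval
variable [Fintype G] {H H₀ : Subgroup G} {ι : G}

lemma mulcard_sum_cCount (hcent : ∀ g : G, g * ι = ι * g)
    (Λ : Finset (Set (G ⧸ H)))
    (hΛCM : ∀ Φ ∈ Λ, IsCMType H ι Φ)
    (hΛrep : ∀ Φ : Set (G ⧸ H), IsCMType H ι Φ → ∃ Φ' ∈ Λ, ∃ τ : G, Φ = τ • Φ')
    (hΛuniq : ∀ Φ ∈ Λ, ∀ Φ' ∈ Λ, (∃ τ : G, Φ' = τ • Φ) → Φ = Φ')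
    (y : G ⧸ H) :
    Fintype.card G * (∑ Φ ∈ Λ, cCount H Φ y) = ∑ Ψ ∈ allCM H ι, nCount H Ψ y := by
  classical
  have hcover : allCM H ι = Λ.biUnion (fun Φ => Finset.univ.image (fun τ : G => τ • Φ)) := by
    ext Ψ
    simp only [Finset.mem_biUnion, Finset.mem_image, Finset.mem_univ, true_and, mem_allCM]
    constructor
    · intro hΨ
      obtain ⟨Φ', hΦ', τ, hτ⟩ := hΛrep Ψ hΨ
      exact ⟨Φ', hΦ', τ, hτ.symm⟩
    · rintro ⟨Φ', hΦ', τ, rfl⟩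
      exact isCM_smul hcent (hΛCM Φ' hΦ') τ
  have hdisj : (↑Λ : Set (Set (G ⧸ H))).PairwiseDisjoint
      (fun Φ => Finset.univ.image (fun τ : G => τ • Φ)) := by
    intro t1 ht1 t2 ht2 hne
    dsimp only [Function.onFun]
    rw [Finset.disjoint_left]
    rintro Ψ h1 h2
    simp only [Finset.mem_image, Finset.mem_univ, true_and] at h1 h2
    obtain ⟨τ, rfl⟩ := h1
    obtain ⟨τ', hτ'⟩ := h2
    apply hne
    apply hΛuniq t1 ht1 t2 ht2
    refine ⟨τ'⁻¹ * τ, ?_⟩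
    rw [mul_smul, ← hτ', inv_smul_smul]
  rw [hcover, Finset.sum_biUnion hdisj, Finset.mul_sum]
  apply Finset.sum_congr rfl
  intro Φ hΦ
  have hconst : ∀ Ψ ∈ Finset.univ.image (fun τ : G => τ • Φ), nCount H Ψ y = nCount H Φ y := by
    intro Ψ hΨ
    simp only [Finset.mem_image, Finset.mem_univ, true_and] at hΨ
    obtain ⟨τ, rfl⟩ := hΨ
    exact nCount_smul Φ τ y
  rw [Finset.sum_const_nat hconst, nCount_eq_mul, ← card_orbit_mul (H := H) Φ]
  ring

lemma sum_nCount_swap (y : G ⧸ H) :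
    ∑ Ψ ∈ allCM H ι, nCount H Ψ y
      = ∑ g : G, ((allCM H ι).filter (fun Ψ => (↑g : G ⧸ H) ∈ Ψ ∧ g • y ∈ Ψ)).card := by
  classical
  letI : Fintype (G ⧸ H) := Fintype.ofFinite _
  have h1 : ∀ Ψ : Set (G ⧸ H), nCount H Ψ y
      = ∑ g : G, if ((↑g : G ⧸ H) ∈ Ψ ∧ g • y ∈ Ψ) then 1 else 0 := by
    intro Ψ
    rw [nCount, Nat.card_eq_fintype_card, Fintype.card_subtype, Finset.card_filter]
  rw [Finset.sum_congr rfl (fun Ψ _ => h1 Ψ), Finset.sum_comm]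
  exact Finset.sum_congr rfl (fun g _ => (Finset.card_filter _ _).symm)

variable (hle : H ≤ H₀) (hι2 : ι * ι = 1) (hcent : ∀ g : G, g * ι = ι * g)
  (hιH : ι ∉ H) (hcosets : ∀ g : G, g ∈ H₀ ↔ g ∈ H ∨ ι * g ∈ H)
  (N : ℕ) (hN : Nat.card (G ⧸ H₀) = N)
  (Λ : Finset (Set (G ⧸ H)))
  (hΛCM : ∀ Φ ∈ Λ, IsCMType H ι Φ)
  (hΛrep : ∀ Φ : Set (G ⧸ H), IsCMType H ι Φ → ∃ Φ' ∈ Λ, ∃ τ : G, Φ = τ • Φ')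
  (hΛuniq : ∀ Φ ∈ Λ, ∀ Φ' ∈ Λ, (∃ τ : G, Φ' = τ • Φ) → Φ = Φ')

include hle hι2 hcent hιH hcosets hN hΛCM hΛrep hΛuniq in
lemma eval_one :
    ∑ Φ ∈ Λ, cCount H Φ ((1 : G) : G ⧸ H) = 2 ^ (N - 1) := by
  classical
  have hN1 : 1 ≤ N := by
    rw [← hN]
    exact Nat.card_pos
  apply Nat.eq_of_mul_eq_mul_left (Fintype.card_pos (α := G))
  rw [mulcard_sum_cCount hcent Λ hΛCM hΛrep hΛuniq, sum_nCount_swap]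
  have hval : ∀ g : G, ((allCM H ι).filter
      (fun Ψ => (↑g : G ⧸ H) ∈ Ψ ∧ g • ((1:G) : G ⧸ H) ∈ Ψ)).card = 2 ^ (N-1) := by
    intro g
    have hsm : g • ((1:G) : G ⧸ H) = (↑g : G ⧸ H) := by rw [smul_mk, mul_one]
    have heq : (allCM H ι).filter (fun Ψ => (↑g : G ⧸ H) ∈ Ψ ∧ g • ((1:G) : G ⧸ H) ∈ Ψ)
        = (allCM H ι).filter (fun Ψ => (↑g : G ⧸ H) ∈ Ψ) := by
      apply Finset.filter_congr
      intro Ψ _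
      rw [hsm, and_self]
    rw [heq]
    have h2 := two_mul_card_filter_mem (H := H) hι2 ((↑g : G ⧸ H))
    rw [card_allCM hle hι2 hcent hιH hcosets N hN] at h2
    have h3 : (2:ℕ)^N = 2 * 2^(N-1) := by
      conv_lhs => rw [show N = 1 + (N-1) by omega]
      rw [pow_add, pow_one]
    omega
  rw [Finset.sum_congr rfl (fun g _ => hval g), Finset.sum_const, smul_eq_mul,
    Finset.card_univ]

include hι2 hcent hΛCM hΛrep hΛuniq in
lemma eval_iota :
    ∑ Φ ∈ Λ, cCount H Φ (ι • ((1 : G) : G ⧸ H)) = 0 := by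
  classical
  apply Nat.eq_of_mul_eq_mul_left (Fintype.card_pos (α := G))
  rw [mulcard_sum_cCount hcent Λ hΛCM hΛrep hΛuniq, sum_nCount_swap, mul_zero]
  apply Finset.sum_eq_zero
  intro g _
  rw [Finset.card_eq_zero, Finset.filter_eq_empty_iff]
  rintro Ψ hΨ ⟨h1, h2⟩
  have hgs : g • (ι • ((1:G) : G ⧸ H)) = ι • (↑g : G ⧸ H) := by
    rw [iota_smul_comm hcent, smul_mk, mul_one]
  rw [hgs] at h2
  rw [mem_allCM] at hΨ
  exact hΨ.1 _ h1 h2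

include hι2 hcent hΛCM hΛrep hΛuniq in
lemma eval_other (y : G ⧸ H) (hy1 : y ≠ ((1:G) : G ⧸ H)) (hy2 : y ≠ ι • ((1:G) : G ⧸ H)) :
    ∑ Φ ∈ Λ, cCount H Φ y = ∑ Φ ∈ Λ, cCount H Φ (ι • y) := by
  classical
  apply Nat.eq_of_mul_eq_mul_left (Fintype.card_pos (α := G))
  rw [mulcard_sum_cCount hcent Λ hΛCM hΛrep hΛuniq,
    mulcard_sum_cCount hcent Λ hΛCM hΛrep hΛuniq, sum_nCount_swap, sum_nCount_swap]
  apply Finset.sum_congr rfl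
  intro g _
  have hgι : g • (ι • y) = ι • (g • y) := iota_smul_comm hcent g y
  rw [hgι]
  have hune : (↑g : G ⧸ H) ∉ ({g • y, ι • (g • y)} : Set (G ⧸ H)) := by
    simp only [Set.mem_insert_iff, Set.mem_singleton_iff]
    rintro (h | h)
    · apply hy1
      have : g • y = g • ((1:G) : G ⧸ H) := by rw [← h, smul_mk, mul_one]
      exact smul_left_cancel g this
    · apply hy2
      have h2 : g • (ι • ((1:G) : G ⧸ H)) = ι • (g • ((1:G) : G ⧸ H)) :=
        iota_smul_comm hcent g _
      have h3 : ι • (g • y) = g • ((1:G) : G ⧸ H) := by rw [← h, smul_mk, mul_one]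
      have h4 : g • y = ι • (g • ((1:G) : G ⧸ H)) := by
        rw [← h3, iota_iota hι2]
      rw [← h2] at h4
      exact smul_left_cancel g h4
  exact card_filter_swap hι2 (g • y) (fun Ψ => (↑g : G ⧸ H) ∈ Ψ)
    (fun Ψ _ => mem_swapAt_of_not_mem hune)

end eval
end CMAux

namespace CMAux

lemma dual_half_eq [Finite G] {H : Subgroup G} [Fintype (G ⧸ H)] (Φ : Set (G ⧸ H))
    {M : Type} [AddCommGroup M] [DistribMulAction G M] (a : M)
    (ha : ∀ h ∈ H, h • a = a) :
    dualHalfNorm H Φ (halfNorm H Φ a)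
      = ∑ y : G ⧸ H, (cCount H Φ y) • ((Quotient.out y : G) • a) := by
  classical
  letI : Fintype (Quotient (QuotientGroup.rightRel (Htilde H Φ))) := Fintype.ofFinite _
  have hHN : halfNorm H Φ a = ∑ φ ∈ Φ.toFinset, (Quotient.out φ : G) • a := by
    rw [halfNorm, finsum_mem_eq_toFinset_sum]
  rw [dualHalfNorm, finsum_eq_sum_of_fintype, hHN]
  have hstep : ∀ c : Quotient (QuotientGroup.rightRel (Htilde H Φ)),
      (if Quotient.out c ∈ SPhi H Φ
        then (Quotient.out c)⁻¹ • ∑ φ ∈ Φ.toFinset, (Quotient.out φ : G) • a else 0)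
      = ∑ y : G ⧸ H, (if (Quotient.out c ∈ SPhi H Φ ∧ (Quotient.out c) • y ∈ Φ)
          then (Quotient.out y : G) • a else 0) := by
    intro c
    by_cases hc : Quotient.out c ∈ SPhi H Φ
    · rw [if_pos hc, Finset.smul_sum]
      have hre : (∑ y : G ⧸ H, if (Quotient.out c ∈ SPhi H Φ ∧ (Quotient.out c) • y ∈ Φ)
          then (Quotient.out y : G) • a else 0)
          = ∑ y ∈ Finset.univ.filter (fun y : G ⧸ H => (Quotient.out c) • y ∈ Φ),
              (Quotient.out y : G) • a := by
        rw [Finset.sum_filter]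
        apply Finset.sum_congr rfl
        intro y _
        simp [hc]
      rw [hre]
      apply Finset.sum_nbij' (i := fun φ => (Quotient.out c)⁻¹ • φ)
        (j := fun y => (Quotient.out c) • y)
      · intro φ hφ
        simp only [Set.mem_toFinset] at hφ
        simp only [Finset.mem_filter, Finset.mem_univ, true_and]
        rwa [smul_inv_smul]
      · intro y hy
        simp only [Finset.mem_filter, Finset.mem_univ, true_and] at hy
        simpa only [Set.mem_toFinset] using hy
      · intro φ _; rw [smul_inv_smul]
      · intro y _; rw [inv_smul_smul]
      · intro φ hφ
        rw [← mul_smul]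
        apply smul_eq_of_mk_eq H ha
        rw [← smul_mk H, mk_out, mk_out]
    · rw [if_neg hc]
      symm
      apply Finset.sum_eq_zero
      intro y _
      rw [if_neg (fun hcon => hc hcon.1)]
  rw [Finset.sum_congr rfl (fun c _ => hstep c), Finset.sum_comm]
  apply Finset.sum_congr rfl
  intro y _
  rw [Finset.sum_ite, Finset.sum_const, Finset.sum_const_zero, add_zero]
  congr 1
  rw [cCount, Nat.card_eq_fintype_card, Fintype.card_subtype]

end CMAux

/-- Let `M` be a `G`-module on which the complex conjugation `ι` acts as `−1`
and let `Λ` be a system of representatives for the conjugacy classes of the CM-types of `K`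
(`[K : ℚ] = 2N`).  Then the composition
`M^H → ⊕_{Φ∈Λ} M^{H̃(Φ)} → M^H` of `(N_Φ)_{Φ∈Λ}` followed by `∑_{Φ∈Λ} N_{Φ*}` is
multiplication by `2^{N−1}` on `M^H`. -/
theorem halfnorm_composition_two_pow
    {G : Type} [Group G] [Finite G] (H H₀ : Subgroup G) (hle : H ≤ H₀) (ι : G)
    (hι2 : ι * ι = 1) (hι1 : ι ≠ 1) (hcent : ∀ g : G, g * ι = ι * g)
    (hιH : ι ∉ H) (hιH₀ : ι ∈ H₀)
    (hcosets : ∀ g : G, g ∈ H₀ ↔ g ∈ H ∨ ι * g ∈ H)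
    (N : ℕ) (hN : Nat.card (G ⧸ H₀) = N) (hN2 : Nat.card (G ⧸ H) = 2 * N)
    (Λ : Finset (Set (G ⧸ H)))
    (hΛCM : ∀ Φ ∈ Λ, IsCMType H ι Φ)
    (hΛrep : ∀ Φ : Set (G ⧸ H), IsCMType H ι Φ → ∃ Φ' ∈ Λ, ∃ τ : G, Φ = τ • Φ')
    (hΛuniq : ∀ Φ ∈ Λ, ∀ Φ' ∈ Λ, (∃ τ : G, Φ' = τ • Φ) → Φ = Φ')
    (M : Type) [AddCommGroup M] [DistribMulAction G M]
    (hιM : ∀ m : M, ι • m = -m) :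
    ∀ a : M, (∀ h ∈ H, h • a = a) →
      ∑ Φ ∈ Λ, dualHalfNorm H Φ (halfNorm H Φ a) = 2 ^ (N - 1) • a := by
  intro a ha
  classical
  letI : Fintype G := Fintype.ofFinite G
  letI : Fintype (G ⧸ H) := Fintype.ofFinite _
  rw [Finset.sum_congr rfl (fun Φ (_ : Φ ∈ Λ) => CMAux.dual_half_eq Φ a ha),
    Finset.sum_comm]
  rw [Finset.sum_congr rfl (fun y (_ : y ∈ (Finset.univ : Finset (G ⧸ H))) =>
    (Finset.sum_smul (f := fun Φ => CMAux.cCount H Φ y)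
      (x := (Quotient.out y : G) • a)).symm)]
  set u1 : G ⧸ H := ((1:G) : G ⧸ H) with hu1
  have hρ1 : (Quotient.out u1 : G) • a = a := by
    rw [CMAux.out_smul H ha, one_smul]
  have hρι : ∀ y : G ⧸ H, (Quotient.out (ι • y) : G) • a = -((Quotient.out y : G) • a) := by
    intro y
    have h1 : ((ι * Quotient.out y : G) : G ⧸ H) = ι • y := by
      rw [← CMAux.smul_mk H, CMAux.mk_out]
    have h2 := CMAux.smul_eq_of_mk_eq H ha
      (g := Quotient.out (ι • y)) (g' := ι * Quotient.out y) (by rw [CMAux.mk_out, h1])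
    rw [h2, mul_smul, hιM]
  have hsplit := Finset.sum_sdiff (s₁ := ({u1, ι • u1} : Finset (G ⧸ H)))
    (s₂ := Finset.univ)
    (f := fun y => (∑ Φ ∈ Λ, CMAux.cCount H Φ y) • ((Quotient.out y : G) • a))
    (Finset.subset_univ _)
  rw [← hsplit]
  have hne1 : u1 ≠ ι • u1 := fun h => CMAux.iota_smul_ne hι2 hcent hιH u1 h.symm
  rw [Finset.sum_pair hne1]
  have hC1 : (∑ Φ ∈ Λ, CMAux.cCount H Φ u1) = 2 ^ (N - 1) :=
    CMAux.eval_one hle hι2 hcent hιH hcosets N hN Λ hΛCM hΛrep hΛuniq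
  have hCι : (∑ Φ ∈ Λ, CMAux.cCount H Φ (ι • u1)) = 0 :=
    CMAux.eval_iota hι2 hcent Λ hΛCM hΛrep hΛuniq
  have hrest : ∑ y ∈ Finset.univ \ ({u1, ι • u1} : Finset (G ⧸ H)),
      (∑ Φ ∈ Λ, CMAux.cCount H Φ y) • ((Quotient.out y : G) • a) = 0 := by
    refine Finset.sum_involution (fun y _ => ι • y) ?_ ?_ ?_ ?_
    · intro y hy
      simp only [Finset.mem_sdiff, Finset.mem_univ, true_and, Finset.mem_insert,
        Finset.mem_singleton] at hy
      push_neg at hy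
      obtain ⟨hy1, hy2⟩ := hy
      have hCeq : (∑ Φ ∈ Λ, CMAux.cCount H Φ (ι • y)) = ∑ Φ ∈ Λ, CMAux.cCount H Φ y :=
        (CMAux.eval_other hι2 hcent Λ hΛCM hΛrep hΛuniq y hy1 hy2).symm
      rw [hρι y, hCeq, smul_neg]
      exact add_neg_cancel _
    · intro y hy hfy
      exact CMAux.iota_smul_ne hι2 hcent hιH y
    · intro y hy
      simp only [Finset.mem_sdiff, Finset.mem_univ, true_and, Finset.mem_insert,
        Finset.mem_singleton] at hy ⊢
      push_neg at hy ⊢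
      obtain ⟨hy1, hy2⟩ := hy
      constructor
      · intro h
        apply hy2
        have h3 := congrArg (fun z => ι • z) h
        simpa [CMAux.iota_iota hι2] using h3
      · intro h
        exact hy1 (smul_left_cancel ι h)
    · intro y hy
      exact CMAux.iota_iota hι2 y
  rw [hrest, hC1, hCι, hρ1, zero_add, zero_smul, add_zero]
end

section
/- Regard G as a subgroup of Ind ⋊ G₀ via the embedding ρ_{Φ₀}. Then Res_G Ind_{⟨1⟩×G₀}^{Ind⋊G₀}(χ_{⟨1⟩×G₀/{0}×G₀}) = Σ_{Φ∈Λ} Ind_{H̃₀(Φ)}^G(χ_{H̃₀(Φ)/H̃(Φ)}) as characters of G, where Λ is a system of representatives for the conjugacy classes of the CM-types of K. -/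
/- Common combinatorial skeleton for the Galois-theoretic setting of the paper:
`G = Gal(K^c/ℚ)`, `H = Gal(K^c/K)`, `H₀ = Gal(K^c/K₀)`, `ι` the complex conjugation.
Embeddings `K ↪ ℂ` correspond to left cosets `G ⧸ H`, embeddings `K₀ ↪ ℂ` to `G ⧸ H₀`. -/

open Pointwise
open scoped Classical

variable {G : Type} [Group G]

/-- The automorphism of `Ind = Map(G/H₀, ℤ/2ℤ)` (written multiplicatively) induced by `σ ∈ G`,
`(σ·f)(τH₀) = f(σ⁻¹τH₀)`. -/
def permAut (H₀ : Subgroup G) (σ : G) :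
    ((G ⧸ H₀) → Multiplicative (ZMod 2)) ≃* ((G ⧸ H₀) → Multiplicative (ZMod 2)) where
  toFun f := fun x => f (σ⁻¹ • x)
  invFun f := fun x => f (σ • x)
  left_inv f := by funext x; simp
  right_inv f := by funext x; simp
  map_mul' f g := rfl

/-- The action of `G` on `Ind` as a homomorphism `G →* Aut(Ind)`. -/
def permHom (H₀ : Subgroup G) : G →* MulAut ((G ⧸ H₀) → Multiplicative (ZMod 2)) where
  toFun := permAut H₀
  map_one' := by
    ext f x
    simp [permAut]
  map_mul' σ τ := by
    ext f x
    simp [permAut, mul_smul]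

/-- Since `C = ⋂_τ τH₀τ⁻¹` acts trivially on `G/H₀`, the action of `G` on `Ind` descends to
`G₀ = G/C`. -/
noncomputable def permHom₀ (H₀ : Subgroup G) :
    (G ⧸ H₀.normalCore) →* MulAut ((G ⧸ H₀) → Multiplicative (ZMod 2)) :=
  QuotientGroup.lift H₀.normalCore (permHom H₀) (by
    intro c hc
    ext f x
    induction x using QuotientGroup.induction_on with
    | H g =>
      show f (c⁻¹ • (g : G ⧸ H₀)) = f g
      congr 1
      show ((c⁻¹ * g : G) : G ⧸ H₀) = g
      rw [QuotientGroup.eq, mul_inv_rev, inv_inv]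
      simpa using hc g⁻¹)

/-- The semidirect product `Ind ⋊ G₀` with multiplication `(f,σ)(f′,σ′) = (f + σ·f′, σσ′)`. -/
noncomputable abbrev IndSemidirect (H₀ : Subgroup G) : Type :=
  SemidirectProduct ((G ⧸ H₀) → Multiplicative (ZMod 2)) (G ⧸ H₀.normalCore) (permHom₀ H₀)

/-- The constant function `1 ∈ Ind`. -/
def oneInd (H₀ : Subgroup G) : (G ⧸ H₀) → Multiplicative (ZMod 2) :=
  fun _ => Multiplicative.ofAdd 1

lemma permHom₀_const (H₀ : Subgroup G) (σ : G ⧸ H₀.normalCore) :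
    permHom₀ H₀ σ (oneInd H₀) = oneInd H₀ := by
  induction σ using QuotientGroup.induction_on with
  | H g => rfl

lemma oneInd_mul_oneInd (H₀ : Subgroup G) : oneInd H₀ * oneInd H₀ = 1 := by
  funext x
  simp only [Pi.mul_apply, Pi.one_apply, oneInd]
  decide

lemma oneInd_inv (H₀ : Subgroup G) : (oneInd H₀)⁻¹ = oneInd H₀ := by
  funext x
  simp only [Pi.inv_apply, oneInd]
  decide

/-- The subgroup `⟨1⟩ × G₀` of `Ind ⋊ G₀`, where `⟨1⟩ = {0, 1}` is generated by the constant
function `1`. -/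
noncomputable def oneTimesG₀ (H₀ : Subgroup G) : Subgroup (IndSemidirect H₀) where
  carrier := {w | w.left = 1 ∨ w.left = oneInd H₀}
  one_mem' := Or.inl rfl
  mul_mem' := by
    rintro a b (ha | ha) (hb | hb) <;>
      simp only [Set.mem_setOf_eq, SemidirectProduct.mul_left, ha, hb, map_one, mul_one,
        one_mul, permHom₀_const, oneInd_mul_oneInd] <;> tauto
  inv_mem' := by
    rintro a (ha | ha) <;>
      simp only [Set.mem_setOf_eq, SemidirectProduct.inv_left, ha, inv_one, map_one,
        oneInd_inv, permHom₀_const] <;> tauto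


/-- The embedding `ρ_{Φ₀} : G → Ind ⋊ G₀`, `τ ↦ (r_{Φ₀}(τ), ρ(τ))`. -/
noncomputable def rhoEmb (H H₀ : Subgroup G) (hle : H ≤ H₀) (Φ₀ : Set (G ⧸ H)) (τ : G) :
    IndSemidirect H₀ :=
  ⟨fun x => Multiplicative.ofAdd (rPhi H H₀ hle Φ₀ τ x), (τ : G ⧸ H₀.normalCore)⟩


section CMAux

variable {G : Type} [Group G] {H H₀ : Subgroup G} {ι : G}

lemma quot_smul_mk (H : Subgroup G) (τ g : G) :
    τ • ((g : G ⧸ H)) = ((τ * g : G) : G ⧸ H) := rfl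

lemma iota_inv (hι2 : ι * ι = 1) : ι⁻¹ = ι := inv_eq_of_mul_eq_one_right hι2

lemma iota_pow_comm (hcent : ∀ g : G, g * ι = ι * g) (τ : G) (k : ℕ) :
    τ * ι ^ k = ι ^ k * τ :=
  (Commute.pow_right (hcent τ) k)

lemma smul_iota_pow_comm (hcent : ∀ g : G, g * ι = ι * g) (τ : G) (k : ℕ) (φ : G ⧸ H) :
    τ • ι ^ k • φ = ι ^ k • τ • φ := by
  rw [smul_smul, smul_smul, iota_pow_comm hcent]

lemma iota_smul_fix (hι2 : ι * ι = 1) (hcent : ∀ g : G, g * ι = ι * g) (hιH₀ : ι ∈ H₀)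
    (x : G ⧸ H₀) : ι • x = x := by
  induction x using QuotientGroup.induction_on with
  | H g =>
    rw [quot_smul_mk, QuotientGroup.eq, mul_inv_rev, iota_inv hι2, mul_assoc, ← hcent g,
      inv_mul_cancel_left]
    exact hιH₀

lemma iota_pow_smul_fix (hι2 : ι * ι = 1) (hcent : ∀ g : G, g * ι = ι * g) (hιH₀ : ι ∈ H₀)
    (k : ℕ) (x : G ⧸ H₀) : ι ^ k • x = x := by
  induction k with
  | zero => simp
  | succ n ih => rw [pow_succ, mul_smul, iota_smul_fix hι2 hcent hιH₀, ih]

lemma iota_smul_ne (hι2 : ι * ι = 1) (hcent : ∀ g : G, g * ι = ι * g) (hιH : ι ∉ H)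
    (φ : G ⧸ H) : ι • φ ≠ φ := by
  induction φ using QuotientGroup.induction_on with
  | H g =>
    rw [quot_smul_mk, Ne, QuotientGroup.eq, mul_inv_rev, iota_inv hι2, mul_assoc,
      ← hcent g, inv_mul_cancel_left]
    exact hιH

lemma proj_mk (hle : H ≤ H₀) (g : G) : proj H H₀ hle (g : G ⧸ H) = (g : G ⧸ H₀) := rfl

lemma proj_smul (hle : H ≤ H₀) (τ : G) (φ : G ⧸ H) :
    proj H H₀ hle (τ • φ) = τ • proj H H₀ hle φ := by
  induction φ using QuotientGroup.induction_on with
  | H g => rfl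

lemma proj_iota_pow (hle : H ≤ H₀) (hι2 : ι * ι = 1) (hcent : ∀ g : G, g * ι = ι * g)
    (hιH₀ : ι ∈ H₀) (k : ℕ) (φ : G ⧸ H) :
    proj H H₀ hle (ι ^ k • φ) = proj H H₀ hle φ := by
  rw [proj_smul, iota_pow_smul_fix hι2 hcent hιH₀]

lemma proj_eq_iff (hle : H ≤ H₀) (hι2 : ι * ι = 1) (hcent : ∀ g : G, g * ι = ι * g)
    (hcosets : ∀ g : G, g ∈ H₀ ↔ g ∈ H ∨ ι * g ∈ H) (φ ψ : G ⧸ H) :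
    proj H H₀ hle φ = proj H H₀ hle ψ ↔ ψ = φ ∨ ψ = ι • φ := by
  induction φ using QuotientGroup.induction_on with
  | H g =>
  induction ψ using QuotientGroup.induction_on with
  | H g' =>
  rw [proj_mk, proj_mk, QuotientGroup.eq, quot_smul_mk, QuotientGroup.eq,
    QuotientGroup.eq, hcosets]
  have e1 : g⁻¹ * g' ∈ H ↔ g'⁻¹ * g ∈ H := by
    constructor <;> intro h <;> simpa [mul_inv_rev] using inv_mem h
  have key : (g'⁻¹ * (ι * g))⁻¹ = ι * (g⁻¹ * g') := by
    rw [mul_inv_rev, mul_inv_rev, inv_inv, iota_inv hι2, hcent g⁻¹, mul_assoc]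
  have e2 : ι * (g⁻¹ * g') ∈ H ↔ g'⁻¹ * (ι * g) ∈ H := by
    rw [← key, inv_mem_iff]
  exact or_congr e1 e2


lemma smul_iota_comm (hcent : ∀ g : G, g * ι = ι * g) (τ : G) (φ : G ⧸ H) :
    τ • ι • φ = ι • τ • φ := by
  simpa using smul_iota_pow_comm hcent τ 1 φ

lemma zmod2_cases : ∀ c : ZMod 2, c = 0 ∨ c = 1 := by decide

lemma iota_pow_val_add (hι2 : ι * ι = 1) (a b : ZMod 2) :
    ι ^ ((a + b).val) = ι ^ a.val * ι ^ b.val := by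
  rcases zmod2_cases a with rfl | rfl <;> rcases zmod2_cases b with rfl | rfl <;>
    simp only [show ((0:ZMod 2)+0).val = 0 from by decide,
      show ((0:ZMod 2)+1).val = 1 from by decide,
      show ((1:ZMod 2)+0).val = 1 from by decide,
      show ((1:ZMod 2)+1).val = 0 from by decide,
      show ((0:ZMod 2)).val = 0 from by decide,
      show ((1:ZMod 2)).val = 1 from by decide,
      pow_zero, pow_one, one_mul, mul_one]
  exact hι2.symm

lemma existsUnique_over (hle : H ≤ H₀) (hι2 : ι * ι = 1) (hcent : ∀ g : G, g * ι = ι * g)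
    (hιH₀ : ι ∈ H₀) (hcosets : ∀ g : G, g ∈ H₀ ↔ g ∈ H ∨ ι * g ∈ H)
    {Φ₀ : Set (G ⧸ H)} (hΦ₀ : IsCMType H ι Φ₀) (x : G ⧸ H₀) :
    ∃! φ, φ ∈ Φ₀ ∧ proj H H₀ hle φ = x := by
  have huniq : ∀ φ ψ, (φ ∈ Φ₀ ∧ proj H H₀ hle φ = x) → (ψ ∈ Φ₀ ∧ proj H H₀ hle ψ = x) →
      ψ = φ := by
    rintro φ ψ ⟨hφ, hφx⟩ ⟨hψ, hψx⟩
    rcases (proj_eq_iff hle hι2 hcent hcosets φ ψ).1 (hφx.trans hψx.symm) with h | h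
    · exact h
    · exact absurd (h ▸ hψ) (hΦ₀.1 φ hφ)
  induction x using QuotientGroup.induction_on with
  | H g =>
    rcases hΦ₀.2 ((g : G ⧸ H)) with hg | hg
    · exact ⟨(g : G ⧸ H), ⟨hg, rfl⟩, fun ψ hψ => huniq _ _ ⟨hg, rfl⟩ hψ⟩
    · refine ⟨ι • (g : G ⧸ H), ⟨hg, ?_⟩, fun ψ hψ => huniq _ _ ⟨hg, ?_⟩ hψ⟩ <;>
        · rw [proj_smul, iota_smul_fix hι2 hcent hιH₀, proj_mk]

noncomputable def uniqOver (hle : H ≤ H₀) (hι2 : ι * ι = 1)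
    (hcent : ∀ g : G, g * ι = ι * g) (hιH₀ : ι ∈ H₀)
    (hcosets : ∀ g : G, g ∈ H₀ ↔ g ∈ H ∨ ι * g ∈ H)
    {Φ₀ : Set (G ⧸ H)} (hΦ₀ : IsCMType H ι Φ₀) (x : G ⧸ H₀) : G ⧸ H :=
  (existsUnique_over hle hι2 hcent hιH₀ hcosets hΦ₀ x).exists.choose

variable (hle : H ≤ H₀) (hι2 : ι * ι = 1) (hcent : ∀ g : G, g * ι = ι * g)
  (hιH₀ : ι ∈ H₀) (hcosets : ∀ g : G, g ∈ H₀ ↔ g ∈ H ∨ ι * g ∈ H)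
  {Φ₀ : Set (G ⧸ H)} (hΦ₀ : IsCMType H ι Φ₀)

include hle hι2 hcent hιH₀ hcosets hΦ₀

lemma uniqOver_mem (x : G ⧸ H₀) : uniqOver hle hι2 hcent hιH₀ hcosets hΦ₀ x ∈ Φ₀ :=
  (existsUnique_over hle hι2 hcent hιH₀ hcosets hΦ₀ x).exists.choose_spec.1

lemma proj_uniqOver (x : G ⧸ H₀) :
    proj H H₀ hle (uniqOver hle hι2 hcent hιH₀ hcosets hΦ₀ x) = x :=
  (existsUnique_over hle hι2 hcent hιH₀ hcosets hΦ₀ x).exists.choose_spec.2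

lemma uniqOver_eq {x : G ⧸ H₀} {φ : G ⧸ H} (hφ : φ ∈ Φ₀) (hx : proj H H₀ hle φ = x) :
    φ = uniqOver hle hι2 hcent hιH₀ hcosets hΦ₀ x :=
  (existsUnique_over hle hι2 hcent hιH₀ hcosets hΦ₀ x).unique ⟨hφ, hx⟩
    ⟨uniqOver_mem hle hι2 hcent hιH₀ hcosets hΦ₀ x,
      proj_uniqOver hle hι2 hcent hιH₀ hcosets hΦ₀ x⟩

lemma rPhi_eq' (τ : G) (x : G ⧸ H₀) :
    rPhi H H₀ hle Φ₀ τ x =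
      if τ⁻¹ • uniqOver hle hι2 hcent hιH₀ hcosets hΦ₀ x ∈ Φ₀ then 0 else 1 := by
  unfold rPhi
  by_cases h : τ⁻¹ • uniqOver hle hι2 hcent hιH₀ hcosets hΦ₀ x ∈ Φ₀
  · rw [if_pos h, if_pos]
    exact ⟨uniqOver hle hι2 hcent hιH₀ hcosets hΦ₀ x,
      uniqOver_mem hle hι2 hcent hιH₀ hcosets hΦ₀ x,
      proj_uniqOver hle hι2 hcent hιH₀ hcosets hΦ₀ x, h⟩
  · rw [if_neg h, if_neg]
    rintro ⟨φ, hφ, hpr, hτ⟩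
    exact h ((uniqOver_eq hle hι2 hcent hιH₀ hcosets hΦ₀ hφ hpr) ▸ hτ)

lemma PhiF_eq_range (f : (G ⧸ H₀) → ZMod 2) :
    PhiF H H₀ hle ι Φ₀ f =
      Set.range (fun x => ι ^ (f x).val • uniqOver hle hι2 hcent hιH₀ hcosets hΦ₀ x) := by
  unfold PhiF
  ext ψ
  simp only [Set.mem_image, Set.mem_range]
  constructor
  · rintro ⟨φ, hφ, rfl⟩
    exact ⟨proj H H₀ hle φ, by
      rw [← uniqOver_eq hle hι2 hcent hιH₀ hcosets hΦ₀ hφ rfl]⟩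
  · rintro ⟨x, rfl⟩
    exact ⟨uniqOver hle hι2 hcent hιH₀ hcosets hΦ₀ x,
      uniqOver_mem hle hι2 hcent hιH₀ hcosets hΦ₀ x, by
        rw [proj_uniqOver hle hι2 hcent hιH₀ hcosets hΦ₀ x]⟩

lemma starAct_point (τ : G) (f : (G ⧸ H₀) → ZMod 2) (x : G ⧸ H₀) :
    τ • ι ^ (f x).val • uniqOver hle hι2 hcent hιH₀ hcosets hΦ₀ x
      = ι ^ ((starAct H H₀ hle Φ₀ τ f) (τ • x)).val •
          uniqOver hle hι2 hcent hιH₀ hcosets hΦ₀ (τ • x) := by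
  set φ := uniqOver hle hι2 hcent hιH₀ hcosets hΦ₀ x with hφdef
  have hφmem : φ ∈ Φ₀ := uniqOver_mem hle hι2 hcent hιH₀ hcosets hΦ₀ x
  have hproj : proj H H₀ hle (τ • φ) = τ • x := by
    rw [proj_smul, hφdef, proj_uniqOver]
  have hsa : (starAct H H₀ hle Φ₀ τ f) (τ • x) = rPhi H H₀ hle Φ₀ τ (τ • x) + f x := by
    simp [starAct, indAct, inv_smul_smul]
  by_cases hc : τ • φ ∈ Φ₀
  · have hu : uniqOver hle hι2 hcent hιH₀ hcosets hΦ₀ (τ • x) = τ • φ :=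
      (uniqOver_eq hle hι2 hcent hιH₀ hcosets hΦ₀ hc hproj).symm
    have hr : rPhi H H₀ hle Φ₀ τ (τ • x) = 0 := by
      rw [rPhi_eq' hle hι2 hcent hιH₀ hcosets hΦ₀, if_pos]
      rw [hu, inv_smul_smul]
      exact hφmem
    rw [hsa, hr, zero_add, hu]
    exact smul_iota_pow_comm hcent τ _ φ
  · have hmem : ι • τ • φ ∈ Φ₀ := (hΦ₀.2 (τ • φ)).resolve_left hc
    have hproj2 : proj H H₀ hle (ι • τ • φ) = τ • x := by
      rw [proj_smul, iota_smul_fix hι2 hcent hιH₀, hproj]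
    have hu : uniqOver hle hι2 hcent hιH₀ hcosets hΦ₀ (τ • x) = ι • τ • φ :=
      (uniqOver_eq hle hι2 hcent hιH₀ hcosets hΦ₀ hmem hproj2).symm
    have hr : rPhi H H₀ hle Φ₀ τ (τ • x) = 1 := by
      rw [rPhi_eq' hle hι2 hcent hιH₀ hcosets hΦ₀, if_neg]
      rw [hu]
      have : τ⁻¹ • ι • τ • φ = ι • φ := by
        rw [← smul_iota_comm hcent, inv_smul_smul]
      rw [this]
      exact hΦ₀.1 φ hφmem
    rw [hsa, hr, hu, iota_pow_val_add hι2, show ((1:ZMod 2)).val = 1 from by decide, pow_one, mul_smul,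
      smul_iota_pow_comm hcent τ _ φ, smul_iota_pow_comm hcent ι _ (ι • τ • φ),
      smul_smul ι ι, hι2, one_smul]

lemma smul_PhiF (τ : G) (f : (G ⧸ H₀) → ZMod 2) :
    τ • PhiF H H₀ hle ι Φ₀ f = PhiF H H₀ hle ι Φ₀ (starAct H H₀ hle Φ₀ τ f) := by
  rw [PhiF_eq_range hle hι2 hcent hιH₀ hcosets hΦ₀,
    PhiF_eq_range hle hι2 hcent hιH₀ hcosets hΦ₀]
  ext ψ
  simp only [Set.mem_smul_set, Set.mem_range]
  constructor
  · rintro ⟨_, ⟨x, rfl⟩, rfl⟩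
    exact ⟨τ • x, (starAct_point hle hι2 hcent hιH₀ hcosets hΦ₀ τ f x).symm⟩
  · rintro ⟨x, rfl⟩
    refine ⟨ι ^ (f (τ⁻¹ • x)).val • uniqOver hle hι2 hcent hιH₀ hcosets hΦ₀ (τ⁻¹ • x),
      ⟨τ⁻¹ • x, rfl⟩, ?_⟩
    rw [starAct_point hle hι2 hcent hιH₀ hcosets hΦ₀ τ f (τ⁻¹ • x), smul_inv_smul]

lemma PhiF_add_one (f : (G ⧸ H₀) → ZMod 2) :
    PhiF H H₀ hle ι Φ₀ (f + 1) = ι • PhiF H H₀ hle ι Φ₀ f := by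
  rw [PhiF_eq_range hle hι2 hcent hιH₀ hcosets hΦ₀,
    PhiF_eq_range hle hι2 hcent hιH₀ hcosets hΦ₀]
  have pt : ∀ x : G ⧸ H₀, ι ^ ((f x + (1:ZMod 2)).val) •
      uniqOver hle hι2 hcent hιH₀ hcosets hΦ₀ x =
      ι • ι ^ (f x).val • uniqOver hle hι2 hcent hιH₀ hcosets hΦ₀ x := fun x => by
    rw [iota_pow_val_add hι2, show ((1:ZMod 2)).val = 1 from by decide, pow_one, mul_smul, ← smul_iota_pow_comm hcent]
  ext ψ
  simp only [Set.mem_smul_set, Set.mem_range, Pi.add_apply, Pi.one_apply]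
  constructor
  · rintro ⟨x, rfl⟩
    exact ⟨_, ⟨x, rfl⟩, (pt x).symm⟩
  · rintro ⟨_, ⟨x, rfl⟩, rfl⟩
    exact ⟨x, pt x⟩


lemma proj_PhiF_elt (f : (G ⧸ H₀) → ZMod 2) (x : G ⧸ H₀) :
    proj H H₀ hle (ι ^ (f x).val • uniqOver hle hι2 hcent hιH₀ hcosets hΦ₀ x) = x := by
  rw [proj_iota_pow hle hι2 hcent hιH₀, proj_uniqOver hle hι2 hcent hιH₀ hcosets hΦ₀]

lemma proj_iota' (φ : G ⧸ H) : proj H H₀ hle (ι • φ) = proj H H₀ hle φ := by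
  simpa using proj_iota_pow hle hι2 hcent hιH₀ 1 φ

variable (hιH : ι ∉ H)
include hιH

lemma PhiF_injective : Function.Injective (PhiF H H₀ hle ι Φ₀) := by
  intro f f' hff
  funext x
  by_contra hne
  rw [PhiF_eq_range hle hι2 hcent hιH₀ hcosets hΦ₀,
    PhiF_eq_range hle hι2 hcent hιH₀ hcosets hΦ₀] at hff
  have hmem : ι ^ (f x).val • uniqOver hle hι2 hcent hιH₀ hcosets hΦ₀ x ∈
      Set.range (fun y => ι ^ (f' y).val • uniqOver hle hι2 hcent hιH₀ hcosets hΦ₀ y) := by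
    rw [← hff]; exact Set.mem_range_self x
  obtain ⟨y, hy⟩ := hmem
  have hxy : y = x := by
    have h2 := congrArg (proj H H₀ hle) hy
    rwa [proj_PhiF_elt hle hι2 hcent hιH₀ hcosets hΦ₀,
      proj_PhiF_elt hle hι2 hcent hιH₀ hcosets hΦ₀] at h2
  subst hxy
  rcases zmod2_cases (f y) with h1 | h1 <;> rcases zmod2_cases (f' y) with h2 | h2 <;>
      simp only [h1, h2, show ((0:ZMod 2)).val = 0 from by decide,
        show ((1:ZMod 2)).val = 1 from by decide, pow_zero, pow_one, one_smul] at hy hne <;>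
    first
      | exact hne trivial
      | exact iota_smul_ne hι2 hcent hιH _ hy
      | exact iota_smul_ne hι2 hcent hιH _ hy.symm

omit hιH

lemma PhiF_surj {Φ : Set (G ⧸ H)} (hΦ : IsCMType H ι Φ) :
    ∃ f, PhiF H H₀ hle ι Φ₀ f = Φ := by
  refine ⟨fun x => if uniqOver hle hι2 hcent hιH₀ hcosets hΦ₀ x ∈ Φ then 0 else 1, ?_⟩
  rw [PhiF_eq_range hle hι2 hcent hιH₀ hcosets hΦ₀]
  ext ψ
  simp only [Set.mem_range]
  constructor
  · rintro ⟨x, rfl⟩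
    by_cases h : uniqOver hle hι2 hcent hιH₀ hcosets hΦ₀ x ∈ Φ
    · simpa [h, show ((0:ZMod 2)).val = 0 from by decide] using h
    · have h2 := (hΦ.2 (uniqOver hle hι2 hcent hιH₀ hcosets hΦ₀ x)).resolve_left h
      simpa [h, show ((1:ZMod 2)).val = 1 from by decide] using h2
  · intro hψ
    refine ⟨proj H H₀ hle ψ, ?_⟩
    have hpu : proj H H₀ hle (uniqOver hle hι2 hcent hιH₀ hcosets hΦ₀ (proj H H₀ hle ψ)) =
        proj H H₀ hle ψ := proj_uniqOver hle hι2 hcent hιH₀ hcosets hΦ₀ _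
    rcases (proj_eq_iff hle hι2 hcent hcosets _ ψ).1 hpu with h | h
    · have hin : uniqOver hle hι2 hcent hιH₀ hcosets hΦ₀ (proj H H₀ hle ψ) ∈ Φ := h ▸ hψ
      simp only [hin, if_true, show ((0:ZMod 2)).val = 0 from by decide, pow_zero, one_smul]
      exact h.symm
    · have hnotin : uniqOver hle hι2 hcent hιH₀ hcosets hΦ₀ (proj H H₀ hle ψ) ∉ Φ :=
        fun hin => hΦ.1 _ hin (h ▸ hψ)
      simp only [hnotin, if_false, show ((1:ZMod 2)).val = 1 from by decide, pow_one]
      exact h.symm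

include hιH

lemma PhiF_isCM (f : (G ⧸ H₀) → ZMod 2) : IsCMType H ι (PhiF H H₀ hle ι Φ₀ f) := by
  rw [PhiF_eq_range hle hι2 hcent hιH₀ hcosets hΦ₀]
  constructor
  · rintro ψ ⟨x, rfl⟩ hιψ
    obtain ⟨y, hy⟩ := hιψ
    have hxy : y = x := by
      have h2 := congrArg (proj H H₀ hle) hy
      rwa [proj_PhiF_elt hle hι2 hcent hιH₀ hcosets hΦ₀,
        proj_iota' hle hι2 hcent hιH₀ hcosets hΦ₀,
        proj_PhiF_elt hle hι2 hcent hιH₀ hcosets hΦ₀] at h2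
    subst hxy
    exact iota_smul_ne hι2 hcent hιH _ hy.symm
  · intro ψ
    have hpu : proj H H₀ hle (uniqOver hle hι2 hcent hιH₀ hcosets hΦ₀ (proj H H₀ hle ψ)) =
        proj H H₀ hle ψ := proj_uniqOver hle hι2 hcent hιH₀ hcosets hΦ₀ _
    rcases (proj_eq_iff hle hι2 hcent hcosets _ ψ).1 hpu with h | h <;>
      rcases zmod2_cases (f (proj H H₀ hle ψ)) with hf | hf
    · refine Or.inl ⟨proj H H₀ hle ψ, ?_⟩
      simp only [hf, show ((0:ZMod 2)).val = 0 from by decide, pow_zero, one_smul]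
      exact h.symm
    · refine Or.inr ⟨proj H H₀ hle ψ, ?_⟩
      simp only [hf, show ((1:ZMod 2)).val = 1 from by decide, pow_one]
      exact (congrArg (fun z => ι • z) h).symm
    · refine Or.inr ⟨proj H H₀ hle ψ, ?_⟩
      simp only [hf, show ((0:ZMod 2)).val = 0 from by decide, pow_zero, one_smul]
      have h2 := congrArg (fun z => ι • z) h
      simp only [smul_smul, hι2, one_smul] at h2
      exact h2.symm
    · refine Or.inl ⟨proj H H₀ hle ψ, ?_⟩
      simp only [hf, show ((1:ZMod 2)).val = 1 from by decide, pow_one]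
      exact h.symm

end CMAux

section SPhiAux

variable {G : Type} [Group G] {H : Subgroup G} {ι : G}

lemma mem_SPhi (Φ : Set (G ⧸ H)) (g : G) : g ∈ SPhi H Φ ↔ (g : G ⧸ H) ∈ Φ := Iff.rfl

lemma SPhi_smul (τ : G) (Φ : Set (G ⧸ H)) : SPhi H (τ • Φ) = τ • SPhi H Φ := by
  ext g
  constructor
  · intro hg
    rw [mem_SPhi, Set.mem_smul_set_iff_inv_smul_mem] at hg
    rw [Set.mem_smul_set_iff_inv_smul_mem]
    show ((τ⁻¹ • g : G) : G ⧸ H) ∈ Φ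
    rwa [smul_eq_mul, ← quot_smul_mk]
  · intro hg
    rw [Set.mem_smul_set_iff_inv_smul_mem] at hg
    rw [mem_SPhi, Set.mem_smul_set_iff_inv_smul_mem]
    have h2 : ((τ⁻¹ • g : G) : G ⧸ H) ∈ Φ := hg
    rwa [smul_eq_mul, ← quot_smul_mk] at h2

lemma SPhi_inj {Φ Ψ : Set (G ⧸ H)} (h : SPhi H Φ = SPhi H Ψ) : Φ = Ψ := by
  ext φ
  induction φ using QuotientGroup.induction_on with
  | H g => exact Set.ext_iff.1 h g

lemma mem_Htilde_iff (τ : G) (Φ : Set (G ⧸ H)) : τ ∈ Htilde H Φ ↔ τ • Φ = Φ := by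
  rw [Htilde, MulAction.mem_stabilizer_iff, ← SPhi_smul]
  exact ⟨fun h => SPhi_inj h, fun h => by rw [h]⟩

lemma conj_smul_iff (x τ : G) (Φ : Set (G ⧸ H)) :
    (x⁻¹ * τ * x) • Φ = Φ ↔ τ • (x • Φ) = x • Φ := by
  rw [mul_smul, mul_smul, inv_smul_eq_iff]

lemma isCM_smul (hι2 : ι * ι = 1) (hcent : ∀ g : G, g * ι = ι * g) {Φ : Set (G ⧸ H)}
    (hΦ : IsCMType H ι Φ) (x : G) : IsCMType H ι (x • Φ) := by
  constructor
  · rintro φ hφ hιφ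
    rw [Set.mem_smul_set_iff_inv_smul_mem] at hφ hιφ
    rw [smul_iota_comm hcent] at hιφ
    exact hΦ.1 _ hφ hιφ
  · intro φ
    rcases hΦ.2 (x⁻¹ • φ) with h | h
    · exact Or.inl ((Set.mem_smul_set_iff_inv_smul_mem).2 h)
    · refine Or.inr ((Set.mem_smul_set_iff_inv_smul_mem).2 ?_)
      rwa [smul_iota_comm hcent]

lemma isCM_not_iota_fix [Nonempty (G ⧸ H)] {Φ : Set (G ⧸ H)} (hΦ : IsCMType H ι Φ) :
    ι • Φ ≠ Φ := by
  intro h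
  obtain ⟨ψ, hψ⟩ : ∃ ψ, ψ ∈ Φ := by
    rcases hΦ.2 (Classical.arbitrary (G ⧸ H)) with h1 | h1
    exacts [⟨_, h1⟩, ⟨_, h1⟩]
  exact hΦ.1 ψ hψ (h ▸ Set.smul_mem_smul_set hψ)

lemma iota_not_mem_Htilde [Nonempty (G ⧸ H)] {Φ : Set (G ⧸ H)} (hΦ : IsCMType H ι Φ) :
    ι ∉ Htilde H Φ := by
  rw [mem_Htilde_iff]
  exact isCM_not_iota_fix hΦ

lemma card_Ht0 [Finite G] {Φ : Set (G ⧸ H)} (hΦ : IsCMType H ι Φ) (Ht₀Φ : Subgroup G)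
    (hmem : ∀ σ, σ ∈ Ht₀Φ ↔ σ ∈ Htilde H Φ ∨ ∃ h ∈ Htilde H Φ, σ = ι * h) :
    Nat.card Ht₀Φ = 2 * Nat.card (Htilde H Φ) := by
  have : Nonempty (G ⧸ H) := inferInstance
  have hset : (Ht₀Φ : Set G) =
      (Htilde H Φ : Set G) ∪ (fun h => ι * h) '' (Htilde H Φ : Set G) := by
    ext σ
    constructor
    · intro hσ
      rcases (hmem σ).1 hσ with h | ⟨b, hb, rfl⟩
      · exact Or.inl h
      · exact Or.inr ⟨b, hb, rfl⟩
    · rintro (h | ⟨b, hb, rfl⟩)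
      · exact (hmem σ).2 (Or.inl h)
      · exact (hmem _).2 (Or.inr ⟨b, hb, rfl⟩)
  have hdisj : Disjoint ((Htilde H Φ : Set G))
      ((fun h => ι * h) '' (Htilde H Φ : Set G)) := by
    rw [Set.disjoint_left]
    rintro a ha ⟨b, hb, rfl⟩
    exact iota_not_mem_Htilde hΦ (by simpa using mul_mem ha (inv_mem hb))
  calc Nat.card Ht₀Φ = ((Ht₀Φ : Set G)).ncard := Nat.card_coe_set_eq _
    _ = ((Htilde H Φ : Set G) ∪ (fun h => ι * h) '' (Htilde H Φ : Set G)).ncard := by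
        rw [hset]
    _ = (Htilde H Φ : Set G).ncard + ((fun h => ι * h) '' (Htilde H Φ : Set G)).ncard :=
        Set.ncard_union_eq hdisj (Set.toFinite _) (Set.toFinite _)
    _ = (Htilde H Φ : Set G).ncard + (Htilde H Φ : Set G).ncard := by
        rw [Set.ncard_image_of_injective _ (mul_right_injective ι)]
    _ = 2 * Nat.card (Htilde H Φ) := by
        rw [← Nat.card_coe_set_eq, two_mul]
        rfl

end SPhiAux




lemma mult_aux1 : ∀ a b c : ZMod 2,
    ((Multiplicative.ofAdd a)⁻¹ * Multiplicative.ofAdd b * Multiplicative.ofAdd c = 1)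
      ↔ b + c = a := by decide

lemma mult_aux2 : ∀ a b c : ZMod 2,
    ((Multiplicative.ofAdd a)⁻¹ * Multiplicative.ofAdd b * Multiplicative.ofAdd c
      = Multiplicative.ofAdd 1) ↔ b + c = a + 1 := by decide

open Classical in
lemma orbit_sum {G : Type} [Group G] [Fintype G] {α : Type} [Fintype α]
    [MulAction G α] (F : α → ℂ) (a : α) :
    ∑ x : G, F (x • a) =
      (Nat.card (MulAction.stabilizer G a)) •
        ∑ b ∈ Finset.univ.image (fun x : G => x • a), F b := by
  rw [Finset.sum_comp F (fun x : G => x • a), Finset.smul_sum]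
  refine Finset.sum_congr rfl fun b hb => ?_
  obtain ⟨x₀, _, rfl⟩ := Finset.mem_image.1 hb
  congr 1
  have e : {x : G // x • a = x₀ • a} ≃ MulAction.stabilizer G a :=
    { toFun := fun u => ⟨x₀⁻¹ * u.1, by
        rw [MulAction.mem_stabilizer_iff, mul_smul, u.2, inv_smul_smul]⟩
      invFun := fun s => ⟨x₀ * s.1, by
        rw [mul_smul, s.2]⟩
      left_inv := fun u => Subtype.ext (by simp)
      right_inv := fun s => Subtype.ext (by simp) }
  rw [Nat.card_eq_fintype_card, ← Fintype.card_congr e, Fintype.card_subtype]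

/-- Induced character `Ind_U^G(χ)` by the standard formula. -/
noncomputable def indChar {G' : Type} [Group G'] (U : Subgroup G') (χ : G' → ℂ) (g : G') : ℂ :=
  (Nat.card U : ℂ)⁻¹ * ∑ᶠ x : G', if x⁻¹ * g * x ∈ U then χ (x⁻¹ * g * x) else 0

/-- **Proposition.** Regarding `G` as a subgroup of `Ind ⋊ G₀` via `ρ_{Φ₀}`,
`Res_G Ind_{⟨1⟩×G₀}^{Ind⋊G₀}(χ_{⟨1⟩×G₀/{0}×G₀}) = ∑_{Φ∈Λ} Ind_{H̃₀(Φ)}^G(χ_{H̃₀(Φ)/H̃(Φ)})`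
as characters of `G`, where `Λ` is a system of representatives for the conjugacy classes of
the CM-types of `K`. -/
theorem restriction_induced_character_identity
    {G : Type} [Group G] [Finite G] (H H₀ : Subgroup G) (hle : H ≤ H₀) (ι : G)
    (hι2 : ι * ι = 1) (hι1 : ι ≠ 1) (hcent : ∀ g : G, g * ι = ι * g)
    (hιH : ι ∉ H) (hιH₀ : ι ∈ H₀)
    (hcosets : ∀ g : G, g ∈ H₀ ↔ g ∈ H ∨ ι * g ∈ H)
    (hfaithful : H.normalCore = ⊥)
    (Φ₀ : Set (G ⧸ H)) (hΦ₀ : IsCMType H ι Φ₀)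
    -- `Λ`: a system of representatives for the conjugacy classes of the CM-types of `K`
    (Λ : Finset (Set (G ⧸ H)))
    (hΛCM : ∀ Φ ∈ Λ, IsCMType H ι Φ)
    (hΛrep : ∀ Φ : Set (G ⧸ H), IsCMType H ι Φ → ∃ Φ' ∈ Λ, ∃ τ : G, Φ = τ • Φ')
    (hΛuniq : ∀ Φ ∈ Λ, ∀ Φ' ∈ Λ, (∃ τ : G, Φ' = τ • Φ) → Φ = Φ')
    -- `H̃₀(Φ) = H̃(Φ) ∪ ιH̃(Φ)`
    (Ht₀ : Set (G ⧸ H) → Subgroup G)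
    (hHt₀ : ∀ (Φ : Set (G ⧸ H)) (σ : G),
      σ ∈ Ht₀ Φ ↔ σ ∈ Htilde H Φ ∨ ∃ h ∈ Htilde H Φ, σ = ι * h) :
    ∀ τ : G,
      indChar (oneTimesG₀ H₀)
          (fun w => if w.left = 1 then 1 else -1) (rhoEmb H H₀ hle Φ₀ τ) =
      ∑ Φ ∈ Λ, indChar (Ht₀ Φ) (fun u => if u ∈ Htilde H Φ then 1 else -1) τ := by
  intro τ
  classical
  letI : Fintype G := Fintype.ofFinite G
  letI : Fintype (G ⧸ H₀) := Fintype.ofFinite _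
  letI : Fintype (G ⧸ H₀.normalCore) := Fintype.ofFinite _
  letI : Fintype (G ⧸ H) := Fintype.ofFinite _
  letI : Fintype (Set (G ⧸ H)) := Fintype.ofFinite _
  letI : Fintype ((G ⧸ H₀) → Multiplicative (ZMod 2)) := Fintype.ofFinite _
  letI : Fintype ((G ⧸ H₀) → ZMod 2) := Fintype.ofFinite _
  have hΦ₀' : IsCMType H ι Φ₀ := hΦ₀
  let eW : ((G ⧸ H₀) → ZMod 2) × (G ⧸ H₀.normalCore) ≃ IndSemidirect H₀ :=
    { toFun := fun p => ⟨fun x => Multiplicative.ofAdd (p.1 x), p.2⟩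
      invFun := fun w => (fun x => (w.left x).toAdd, w.right)
      left_inv := fun p => rfl
      right_inv := fun w => rfl }
  letI : Fintype (IndSemidirect H₀) := Fintype.ofEquiv _ eW
  set E : Set (G ⧸ H) → ℂ :=
    fun Ψ => if τ • Ψ = Ψ then 1 else if τ • Ψ = ι • Ψ then -1 else 0 with hE
  set CMT : Finset (Set (G ⧸ H)) := Finset.univ.filter (fun Ψ => IsCMType H ι Ψ) with hCMT
  -- membership description of Ht₀
  have hHt0' : ∀ (Φ : Set (G ⧸ H)) (σ : G), σ ∈ Ht₀ Φ ↔ (σ • Φ = Φ ∨ σ • Φ = ι • Φ) := by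
    intro Φ σ
    rw [hHt₀ Φ σ, mem_Htilde_iff]
    constructor
    · rintro (h | ⟨h, hh, rfl⟩)
      · exact Or.inl h
      · rw [mem_Htilde_iff] at hh
        exact Or.inr (by rw [mul_smul, hh])
    · rintro (h | h)
      · exact Or.inl h
      · refine Or.inr ⟨ι * σ, ?_, by rw [← mul_assoc, hι2, one_mul]⟩
        rw [mem_Htilde_iff, mul_smul, h, smul_smul, hι2, one_smul]
  -- cardinality of the subgroup ⟨1⟩ × G₀
  have h1ne : (1 : (G ⧸ H₀) → Multiplicative (ZMod 2)) ≠ oneInd H₀ := by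
    intro h
    have hne2 : (1 : Multiplicative (ZMod 2)) ≠ Multiplicative.ofAdd 1 := by decide
    exact hne2 (congrFun h ((1 : G) : G ⧸ H₀))
  have hUcard : Nat.card (oneTimesG₀ H₀) = 2 * Nat.card (G ⧸ H₀.normalCore) := by
    have e : ↥(oneTimesG₀ H₀) ≃
        ↥({(1 : (G ⧸ H₀) → Multiplicative (ZMod 2)), oneInd H₀} : Set _) ×
          (G ⧸ H₀.normalCore) :=
      { toFun := fun u => (⟨u.1.left, u.2⟩, u.1.right)
        invFun := fun p => ⟨⟨p.1.1, p.2⟩, p.1.2⟩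
        left_inv := fun u => rfl
        right_inv := fun p => rfl }
    rw [Nat.card_congr e, Nat.card_prod, Nat.card_coe_set_eq, Set.ncard_pair h1ne]
  -- the key pointwise computation on the left-hand side
  have hstep : ∀ w : IndSemidirect H₀,
      (if w⁻¹ * rhoEmb H H₀ hle Φ₀ τ * w ∈ oneTimesG₀ H₀ then
        (if (w⁻¹ * rhoEmb H H₀ hle Φ₀ τ * w).left = 1 then (1:ℂ) else -1) else 0)
        = E (PhiF H H₀ hle ι Φ₀ (fun x => (w.left x).toAdd)) := by
    intro w
    set g : (G ⧸ H₀) → ZMod 2 := fun x => (w.left x).toAdd with hg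
    have hleft : (w⁻¹ * rhoEmb H H₀ hle Φ₀ τ * w).left =
        permHom₀ H₀ w.right⁻¹ ((w.left)⁻¹ *
          (fun x => Multiplicative.ofAdd (rPhi H H₀ hle Φ₀ τ x)) *
          permHom₀ H₀ ((τ : G ⧸ H₀.normalCore)) w.left) := by
      simp only [SemidirectProduct.mul_left, SemidirectProduct.inv_left,
        SemidirectProduct.mul_right, SemidirectProduct.inv_right, rhoEmb,
        map_mul, map_inv, MulAut.mul_apply, mul_assoc]
    have h1 : ((w⁻¹ * rhoEmb H H₀ hle Φ₀ τ * w).left = 1) ↔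
        starAct H H₀ hle Φ₀ τ g = g := by
      rw [hleft, MulEquiv.map_eq_one_iff, funext_iff, funext_iff]
      refine forall_congr' fun x => ?_
      exact mult_aux1 (g x) (rPhi H H₀ hle Φ₀ τ x) (g (τ⁻¹ • x))
    have h2 : ((w⁻¹ * rhoEmb H H₀ hle Φ₀ τ * w).left = oneInd H₀) ↔
        starAct H H₀ hle Φ₀ τ g = g + 1 := by
      rw [hleft, ← permHom₀_const H₀ w.right⁻¹, EmbeddingLike.apply_eq_iff_eq,
        funext_iff, funext_iff]
      refine forall_congr' fun x => ?_
      exact mult_aux2 (g x) (rPhi H H₀ hle Φ₀ τ x) (g (τ⁻¹ • x))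
    have hmemiff : (w⁻¹ * rhoEmb H H₀ hle Φ₀ τ * w ∈ oneTimesG₀ H₀) ↔
        ((w⁻¹ * rhoEmb H H₀ hle Φ₀ τ * w).left = 1 ∨
          (w⁻¹ * rhoEmb H H₀ hle Φ₀ τ * w).left = oneInd H₀) := Iff.rfl
    have hA : (starAct H H₀ hle Φ₀ τ g = g) ↔
        (τ • PhiF H H₀ hle ι Φ₀ g = PhiF H H₀ hle ι Φ₀ g) := by
      rw [smul_PhiF hle hι2 hcent hιH₀ hcosets hΦ₀',
        (PhiF_injective hle hι2 hcent hιH₀ hcosets hΦ₀' hιH).eq_iff]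
    have hB : (starAct H H₀ hle Φ₀ τ g = g + 1) ↔
        (τ • PhiF H H₀ hle ι Φ₀ g = ι • PhiF H H₀ hle ι Φ₀ g) := by
      rw [smul_PhiF hle hι2 hcent hιH₀ hcosets hΦ₀',
        ← PhiF_add_one hle hι2 hcent hιH₀ hcosets hΦ₀',
        (PhiF_injective hle hι2 hcent hιH₀ hcosets hΦ₀' hιH).eq_iff]
    simp only [hE]
    by_cases hcase1 : starAct H H₀ hle Φ₀ τ g = g
    · rw [if_pos (hmemiff.2 (Or.inl (h1.2 hcase1))), if_pos (h1.2 hcase1),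
        if_pos (hA.1 hcase1)]
    · by_cases hcase2 : starAct H H₀ hle Φ₀ τ g = g + 1
      · rw [if_pos (hmemiff.2 (Or.inr (h2.2 hcase2))), if_neg (fun h => hcase1 (h1.1 h)),
          if_neg (fun h => hcase1 (hA.2 h)), if_pos (hB.1 hcase2)]
      · have hnot : ¬ (w⁻¹ * rhoEmb H H₀ hle Φ₀ τ * w ∈ oneTimesG₀ H₀) := by
          intro h
          rcases hmemiff.1 h with h' | h'
          exacts [hcase1 (h1.1 h'), hcase2 (h2.1 h')]
        rw [if_neg hnot, if_neg (fun h => hcase1 (hA.2 h)),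
          if_neg (fun h => hcase2 (hB.2 h))]
  -- the left-hand side
  have hLHS : indChar (oneTimesG₀ H₀) (fun w => if w.left = 1 then (1:ℂ) else -1)
      (rhoEmb H H₀ hle Φ₀ τ) = (2:ℂ)⁻¹ * ∑ Ψ ∈ CMT, E Ψ := by
    unfold indChar
    rw [finsum_eq_sum_of_fintype]
    simp only []
    rw [Finset.sum_congr rfl (fun w _ => hstep w)]
    rw [← Equiv.sum_comp eW
      (fun w => E (PhiF H H₀ hle ι Φ₀ (fun x => (w.left x).toAdd)))]
    rw [Fintype.sum_prod_type]
    rw [hUcard]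
    have hcongr : ∀ (a : (G ⧸ H₀) → ZMod 2) (b : G ⧸ H₀.normalCore),
        E (PhiF H H₀ hle ι Φ₀ (fun x => ((eW (a, b)).left x).toAdd))
          = E (PhiF H H₀ hle ι Φ₀ a) := fun a b => rfl
    calc (↑(2 * Nat.card (G ⧸ H₀.normalCore)) : ℂ)⁻¹ *
          ∑ a : (G ⧸ H₀) → ZMod 2, ∑ b : G ⧸ H₀.normalCore,
            E (PhiF H H₀ hle ι Φ₀ (fun x => ((eW (a, b)).left x).toAdd))
        = (↑(2 * Nat.card (G ⧸ H₀.normalCore)) : ℂ)⁻¹ *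
          ∑ a : (G ⧸ H₀) → ZMod 2, (Nat.card (G ⧸ H₀.normalCore) : ℂ) *
            E (PhiF H H₀ hle ι Φ₀ a) := by
          congr 1
          refine Finset.sum_congr rfl fun a _ => ?_
          rw [Finset.sum_congr rfl (fun b _ => hcongr a b), Finset.sum_const,
            Finset.card_univ, nsmul_eq_mul, Nat.card_eq_fintype_card]
      _ = (2:ℂ)⁻¹ * ∑ a : (G ⧸ H₀) → ZMod 2, E (PhiF H H₀ hle ι Φ₀ a) := by
          rw [← Finset.mul_sum, Nat.cast_mul, mul_inv, Nat.cast_ofNat, mul_assoc,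
            inv_mul_cancel_left₀ (Nat.cast_ne_zero.2 Nat.card_pos.ne')]
      _ = (2:ℂ)⁻¹ * ∑ Ψ ∈ CMT, E Ψ := by
          congr 1
          refine Finset.sum_bij (fun a _ => PhiF H H₀ hle ι Φ₀ a) ?_ ?_ ?_ ?_
          · intro a _
            rw [hCMT]
            exact Finset.mem_filter.2 ⟨Finset.mem_univ _,
              PhiF_isCM hle hι2 hcent hιH₀ hcosets hΦ₀' hιH a⟩
          · intro a _ a' _ haa'
            exact (PhiF_injective hle hι2 hcent hιH₀ hcosets hΦ₀' hιH) haa'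
          · intro Ψ hΨ
            rw [hCMT] at hΨ
            obtain ⟨a, ha⟩ := PhiF_surj hle hι2 hcent hιH₀ hcosets hΦ₀'
              ((Finset.mem_filter.1 hΨ).2)
            exact ⟨a, Finset.mem_univ _, ha⟩
          · exact fun a _ => rfl
  -- the right-hand side, term by term
  have hRHS : ∀ Φ ∈ Λ, indChar (Ht₀ Φ) (fun u => if u ∈ Htilde H Φ then (1:ℂ) else -1) τ
      = (2:ℂ)⁻¹ * ∑ Ψ ∈ Finset.univ.image (fun x : G => x • Φ), E Ψ := by
    intro Φ hΦΛ
    have hΦCM : IsCMType H ι Φ := hΛCM Φ hΦΛ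
    have hstab : MulAction.stabilizer G Φ = Htilde H Φ := by
      ext y
      rw [MulAction.mem_stabilizer_iff, mem_Htilde_iff]
    have hsummand : ∀ x : G,
        (if x⁻¹ * τ * x ∈ Ht₀ Φ then
          (if x⁻¹ * τ * x ∈ Htilde H Φ then (1:ℂ) else -1) else 0) = E (x • Φ) := by
      intro x
      have hQ : (x⁻¹ * τ * x ∈ Htilde H Φ) ↔ τ • (x • Φ) = x • Φ := by
        rw [mem_Htilde_iff, conj_smul_iff]
      have hP2 : ((x⁻¹ * τ * x) • Φ = ι • Φ) ↔ τ • (x • Φ) = ι • (x • Φ) := by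
        rw [mul_smul, mul_smul, inv_smul_eq_iff, smul_smul x ι, hcent x, ← smul_smul]
      have hP : (x⁻¹ * τ * x ∈ Ht₀ Φ) ↔
          (τ • (x • Φ) = x • Φ ∨ τ • (x • Φ) = ι • (x • Φ)) := by
        rw [hHt0' Φ (x⁻¹ * τ * x), conj_smul_iff, hP2]
      simp only [hE]
      by_cases hA : τ • (x • Φ) = x • Φ
      · rw [if_pos (hP.2 (Or.inl hA)), if_pos (hQ.2 hA), if_pos hA]
      · by_cases hB : τ • (x • Φ) = ι • (x • Φ)
        · rw [if_pos (hP.2 (Or.inr hB)), if_neg (fun h => hA (hQ.1 h)), if_neg hA,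
            if_pos hB]
        · rw [if_neg (fun h => (hP.1 h).elim hA hB), if_neg hA, if_neg hB]
    unfold indChar
    rw [finsum_eq_sum_of_fintype]
    simp only []
    rw [Finset.sum_congr rfl (fun x _ => hsummand x)]
    rw [orbit_sum E Φ, hstab, card_Ht0 hΦCM (Ht₀ Φ) (hHt₀ Φ)]
    rw [nsmul_eq_mul, Nat.cast_mul, mul_inv, Nat.cast_ofNat, mul_assoc,
      inv_mul_cancel_left₀ (Nat.cast_ne_zero.2 Nat.card_pos.ne')]
    congr
  -- assemble
  have hdisjoint : (Λ : Set (Set (G ⧸ H))).PairwiseDisjoint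
      (fun Φ => Finset.univ.image (fun x : G => x • Φ)) := by
    intro Φ₁ h₁ Φ₂ h₂ hne
    refine Finset.disjoint_left.2 ?_
    intro Ψ hΨ1 hΨ2
    obtain ⟨a, _, rfl⟩ := Finset.mem_image.1 hΨ1
    obtain ⟨b, _, hb⟩ := Finset.mem_image.1 hΨ2
    have heq : Φ₂ = (b⁻¹ * a) • Φ₁ := by rw [mul_smul, ← hb, inv_smul_smul]
    exact hne (hΛuniq Φ₁ h₁ Φ₂ h₂ ⟨b⁻¹ * a, heq⟩)
  have hpart : CMT = Λ.biUnion (fun Φ => Finset.univ.image (fun x : G => x • Φ)) := by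
    ext Ψ
    rw [hCMT, Finset.mem_biUnion]
    constructor
    · intro hΨ
      obtain ⟨Φ', hΦ', τ', hτ'⟩ := hΛrep Ψ (Finset.mem_filter.1 hΨ).2
      exact ⟨Φ', hΦ', Finset.mem_image.2 ⟨τ', Finset.mem_univ _, hτ'.symm⟩⟩
    · rintro ⟨Φ', hΦ', hΨ⟩
      obtain ⟨x, _, rfl⟩ := Finset.mem_image.1 hΨ
      exact Finset.mem_filter.2 ⟨Finset.mem_univ _,
        isCM_smul hι2 hcent (hΛCM Φ' hΦ') x⟩
  have hR2 : ∑ Φ ∈ Λ, indChar (Ht₀ Φ) (fun u => if u ∈ Htilde H Φ then (1:ℂ) else -1) τ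
      = (2:ℂ)⁻¹ * ∑ Ψ ∈ CMT, E Ψ := by
    rw [Finset.sum_congr rfl hRHS, ← Finset.mul_sum]
    congr 1
    rw [hpart, Finset.sum_biUnion hdisjoint]
  have hfin := hLHS.trans hR2.symm
  convert hfin using 2
  funext w
  congr 1
end
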